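/- arXiv:1707.05148 — 3 statements merged into one kernel-verified Lean document; each statement's English description precedes it below -/
import Mathlib

section
/- Let G be a connected simple graph of order n ≥ 3. Then the modular edge-gracefulness satisfies k(G) = n if n ≢ 2 (mod 4), and k(G) = n + 1 if n ≡ 2 (mod 4). -/
/-- The weighted degree of a vertex `v` under an edge labeling `f` with values in an
additive Abelian group: the sum of the labels of all edges incident to `v`. -/
noncomputable def SimpleGraph.wdeg {V : Type} [Fintype V] (G : SimpleGraph V)
    {A : Type} [AddCommGroup A] (f : Sym2 V → A) (v : V) : A :=
  ∑ u ∈ (G.neighborSet v).toFinite.toFinset, f s(v, u)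

/-- An edge labeling `f` with values in an Abelian group `A` is `A`-irregular if the
weighted degrees of all vertices are pairwise distinct. -/
def SimpleGraph.IsIrregular {V : Type} [Fintype V] (G : SimpleGraph V)
    {A : Type} [AddCommGroup A] (f : Sym2 V → A) : Prop :=
  Function.Injective (G.wdeg f)

/-- The group irregularity strength `s_g(G)`: the smallest integer `s` such that for
every Abelian group of order `s` there exists a `𝒢`-irregular labeling of `G`. -/
noncomputable def SimpleGraph.groupIrregularityStrength {V : Type} [Fintype V]
    (G : SimpleGraph V) : ℕ :=
  sInf {s : ℕ | ∀ (A : Type) [AddCommGroup A] [Fintype A],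
    Fintype.card A = s → ∃ f : Sym2 V → A, G.IsIrregular f}

/-- The modular edge-gracefulness `k(G)`: the smallest integer `k ≥ |V(G)|` such that
there exists a `ℤ_k`-irregular labeling of `G`. -/
noncomputable def SimpleGraph.modularEdgeGracefulness {V : Type} [Fintype V]
    (G : SimpleGraph V) : ℕ :=
  sInf {k : ℕ | Fintype.card V ≤ k ∧ ∃ f : Sym2 V → ZMod k, G.IsIrregular f}

/-- `(X, Y)` is a bipartition of the connected component `c` of `G`: the two classes
partition the vertex set of `c` and every edge of the component joins `X` and `Y`. -/
def SimpleGraph.IsComponentBipartition {V : Type} (G : SimpleGraph V)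
    (c : G.ConnectedComponent) (X Y : Set V) : Prop :=
  X ∪ Y = c.supp ∧ Disjoint X Y ∧
    ∀ u v : V, u ∈ c.supp → v ∈ c.supp → G.Adj u v →
      ((u ∈ X ∧ v ∈ Y) ∨ (u ∈ Y ∧ v ∈ X))


set_option linter.unusedSectionVars false
set_option maxHeartbeats 1000000

open Finset

namespace MEG

lemma castInj {k : ℕ} [NeZero k] {x y : ℕ} (hx : x < k) (hy : y < k)
    (h : (x : ZMod k) = y) : x = y := by
  have := congrArg ZMod.val h
  rwa [ZMod.val_cast_of_lt hx, ZMod.val_cast_of_lt hy] at this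

lemma sum_subst {k : ℕ} (s : Finset ℕ) (a : ℕ) (c : ZMod k) (ha : a ∈ s) :
    ∑ x ∈ s, (if x = a then c else (x : ZMod k)) = (∑ x ∈ s, (x : ZMod k)) - a + c := by
  have h1 : ∑ x ∈ s, (if x = a then c else (x : ZMod k)) =
      ∑ x ∈ s \ {a}, (if x = a then c else (x : ZMod k)) + (if a = a then c else (a:ZMod k)) :=
    Finset.sum_eq_sum_sdiff_singleton_add ha _
  have h2 : ∑ x ∈ s, (x : ZMod k) = ∑ x ∈ s \ {a}, (x : ZMod k) + a :=
    Finset.sum_eq_sum_sdiff_singleton_add ha _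
  have h3 : ∑ x ∈ s \ {a}, (if x = a then c else (x : ZMod k)) = ∑ x ∈ s \ {a}, (x : ZMod k) := by
    refine Finset.sum_congr rfl fun x hx => ?_
    rw [if_neg]
    simp only [Finset.mem_sdiff, Finset.mem_singleton] at hx
    exact hx.2
  rw [h1, h3, h2]
  rw [if_pos rfl]
  abel

/-- reduce the `Fin n` filtered sums to sums over `range p` and `Ico p n`. -/
lemma sum_finlow {k n p : ℕ} (hpn : p ≤ n) (g : ℕ → ZMod k) :
    ∑ i ∈ univ.filter (fun i : Fin n => (i : ℕ) < p), g (i : ℕ) = ∑ j ∈ range p, g j := by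
  rw [Finset.sum_filter]
  rw [show (∑ i : Fin n, if (i:ℕ) < p then g (i:ℕ) else 0) =
      ∑ j ∈ range n, (if j < p then g j else 0) from
    Fin.sum_univ_eq_sum_range (fun j => if j < p then g j else 0) n]
  rw [Finset.range_eq_Ico, ← Finset.sum_Ico_consecutive _ (Nat.zero_le p) hpn]
  have h1 : ∑ j ∈ Ico 0 p, (if j < p then g j else 0) = ∑ j ∈ Ico 0 p, g j :=
    Finset.sum_congr rfl fun j hj => if_pos (by simp at hj; omega)
  have h2 : ∑ j ∈ Ico p n, (if j < p then g j else 0) = 0 :=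
    Finset.sum_eq_zero fun j hj => if_neg (by simp at hj; omega)
  rw [h1, h2, add_zero, ← Finset.range_eq_Ico]

lemma sum_finhigh {k n p : ℕ} (hpn : p ≤ n) (g : ℕ → ZMod k) :
    ∑ i ∈ univ.filter (fun i : Fin n => ¬ (i : ℕ) < p), g (i : ℕ) = ∑ j ∈ Ico p n, g j := by
  rw [Finset.sum_filter]
  rw [show (∑ i : Fin n, if ¬ (i:ℕ) < p then g (i:ℕ) else 0) =
      ∑ j ∈ range n, (if ¬ j < p then g j else 0) from
    Fin.sum_univ_eq_sum_range (fun j => if ¬ j < p then g j else 0) n]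
  rw [Finset.range_eq_Ico, ← Finset.sum_Ico_consecutive _ (Nat.zero_le p) hpn]
  have h1 : ∑ j ∈ Ico 0 p, (if ¬ j < p then g j else 0) = 0 :=
    Finset.sum_eq_zero fun j hj => if_neg (by simp at hj; omega)
  have h2 : ∑ j ∈ Ico p n, (if ¬ j < p then g j else 0) = ∑ j ∈ Ico p n, g j :=
    Finset.sum_congr rfl fun j hj => if_pos (by simp at hj; omega)
  rw [h1, h2, zero_add]

lemma exists_target (k n p : ℕ) [NeZero k] (h3 : 3 ≤ n) (hp : 1 ≤ p) (hpn : p < n)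
    (hk : (k = n ∧ n % 2 = 1) ∨ (k = n ∧ n % 4 = 0) ∨ (k = n + 1 ∧ n % 4 = 2)) :
    ∃ t : Fin n → ZMod k, Function.Injective t ∧
      ∑ i ∈ univ.filter (fun i : Fin n => (i : ℕ) < p), t i =
      ∑ i ∈ univ.filter (fun i : Fin n => ¬ (i : ℕ) < p), t i := by
  have hnk : n ≤ k := by rcases hk with ⟨rfl, -⟩ | ⟨rfl, -⟩ | ⟨rfl, -⟩ <;> omega
  have hk1 : 1 ≤ k := by omega
  set Sp : ℕ := ∑ j ∈ range p, j with hSp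
  set SI : ℕ := ∑ j ∈ Ico p n, j with hSI
  have hksum : Sp + SI = ∑ j ∈ range n, j := by
    rw [hSp, hSI, Finset.range_eq_Ico, Finset.sum_Ico_consecutive _ (Nat.zero_le p) (le_of_lt hpn),
      ← Finset.range_eq_Ico]
  -- the key difference parameter
  have key : ∃ d : ℕ, d < k ∧ 2 * (d : ZMod k) = (SI : ZMod k) - (Sp : ZMod k) := by
    have hcast1 : ((k - 1 : ℕ) : ZMod k) = -1 := by
      have h1 : ((k - 1 : ℕ) : ZMod k) + ((1 : ℕ) : ZMod k) = ((k : ℕ) : ZMod k) := by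
        rw [← Nat.cast_add]; congr 1; omega
      rw [ZMod.natCast_self] at h1
      push_cast at h1
      linear_combination h1
    by_cases hko : k % 2 = 1
    · -- k odd
      set X : ℕ := SI + (k - 1) * Sp with hX
      refine ⟨((k+1)/2 * X) % k, Nat.mod_lt _ (by omega), ?_⟩
      rw [ZMod.natCast_mod]
      have h2 : 2 * ((k+1)/2 * X) = k * X + X := by
        have h2' : 2 * ((k+1)/2) = k + 1 := by omega
        rw [← Nat.mul_assoc, h2']; ring
      have : (2 : ZMod k) * ((((k+1)/2 * X) : ℕ) : ZMod k) = ((2 * ((k+1)/2 * X) : ℕ) : ZMod k) := by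
        push_cast; ring
      rw [this, h2]
      have hXc : ((X : ℕ) : ZMod k) = (SI : ZMod k) - (Sp : ZMod k) := by
        rw [hX]; push_cast [hcast1]; ring
      push_cast [ZMod.natCast_self]
      push_cast at hXc
      linear_combination hXc
    · -- k = n, n % 4 = 0
      have hkn : k = n ∧ n % 4 = 0 := by
        rcases hk with ⟨rfl, h⟩ | ⟨rfl, h⟩ | ⟨rfl, h⟩ <;> first | omega | exact ⟨rfl, h⟩
      obtain ⟨hkn', hn4⟩ := hkn
      obtain ⟨m, hm⟩ : ∃ m, n = 4 * m := ⟨n / 4, by omega⟩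
      set X : ℕ := n/4 + (n - 1) * Sp with hX
      refine ⟨X % k, Nat.mod_lt _ (by omega), ?_⟩
      rw [ZMod.natCast_mod]
      -- Gauss sum: (Sp + SI) * 2 = n * (n-1)
      have hg : (Sp + SI) * 2 = n * (n - 1) := by
        rw [hksum]; exact Finset.sum_range_id_mul_two n
      have hg2 : Sp + SI = 2 * (m * (n - 1)) := by
        have : n * (n - 1) = (2 * (m * (n-1))) * 2 := by rw [hm]; ring
        rw [this] at hg
        exact Nat.eq_of_mul_eq_mul_right two_pos hg
      have hE1 : (Sp : ZMod k) + (SI : ZMod k) = 2 * (m : ZMod k) * (((n-1 : ℕ)) : ZMod k) := by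
        have := congrArg (fun x : ℕ => (x : ZMod k)) hg2
        push_cast at this
        linear_combination this
      have hE2 : ((n : ℕ) : ZMod k) = 0 := by rw [hkn']; exact ZMod.natCast_self n
      have hE3 : (4 : ZMod k) * (m : ZMod k) = 0 := by
        have := congrArg (fun x : ℕ => (x : ZMod k)) hm.symm
        push_cast at this
        rw [hE2] at this
        linear_combination this
      have hE4 : (((n - 1 : ℕ)) : ZMod k) = ((n : ℕ) : ZMod k) - 1 := by
        have h1 : ((n - 1 : ℕ) : ZMod k) + ((1:ℕ) : ZMod k) = ((n : ℕ) : ZMod k) := by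
          rw [← Nat.cast_add]; congr 1; omega
        push_cast at h1
        linear_combination h1
      have hE5 : ((n/4 : ℕ) : ZMod k) = (m : ZMod k) := by congr 1; omega
      have hXc : ((X : ℕ) : ZMod k) = (m : ZMod k) + (((n-1:ℕ)) : ZMod k) * (Sp : ZMod k) := by
        rw [hX]; push_cast [hE5]; ring
      rw [hE4, hE2] at hE1
      rw [hXc, hE4, hE2]
      linear_combination -hE1 + hE3
  obtain ⟨d, hdk, hd⟩ := key
  by_cases hd0 : d = 0
  · -- identity move
    refine ⟨fun i => ((i : ℕ) : ZMod k), ?_, ?_⟩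
    · intro i j hij
      exact Fin.ext (castInj (lt_of_lt_of_le i.isLt hnk) (lt_of_lt_of_le j.isLt hnk) hij)
    · rw [sum_finlow (le_of_lt hpn) (fun x => (x : ZMod k)),
        sum_finhigh (le_of_lt hpn) (fun x => (x : ZMod k)),
        ← Nat.cast_sum, ← Nat.cast_sum, ← hSp, ← hSI]
      subst hd0
      push_cast at hd
      linear_combination hd
  · by_cases hdn : d ≤ n - 1
    · -- swap move
      obtain ⟨a, b, hab, ha, hb1, hb2⟩ : ∃ a b : ℕ, b = a + d ∧ a < p ∧ p ≤ b ∧ b < n := by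
        by_cases hdp : d ≤ p
        · exact ⟨p - d, p, by omega, by omega, le_refl p, hpn⟩
        · exact ⟨0, d, by omega, by omega, by omega, by omega⟩
      refine ⟨fun i => if (i:ℕ) = a then (b : ZMod k) else if (i:ℕ) = b then (a : ZMod k)
        else ((i:ℕ) : ZMod k), ?_, ?_⟩
      · intro i j hij
        simp only at hij
        have hi := i.isLt; have hj := j.isLt
        apply Fin.ext
        split_ifs at hij with h1 h2 h3 h4 h5 h6 h7 h8 <;>
          first
            | omega
            | (exact absurd (castInj (by omega) (by omega) hij) (by omega))
            | (exact castInj (by omega) (by omega) hij)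
      · rw [sum_finlow (le_of_lt hpn) (fun x => if x = a then (b : ZMod k) else if x = b then
            (a : ZMod k) else (x : ZMod k)),
          sum_finhigh (le_of_lt hpn) (fun x => if x = a then (b : ZMod k) else if x = b then
            (a : ZMod k) else (x : ZMod k))]
        have e1 : ∑ j ∈ range p, (if j = a then (b : ZMod k) else if j = b then (a:ZMod k) else (j:ZMod k)) =
            (Sp : ZMod k) - a + b := by
          have hc : ∀ j ∈ range p, (if j = a then (b : ZMod k) else if j = b then (a:ZMod k) else (j:ZMod k)) =
              (if j = a then (b : ZMod k) else (j : ZMod k)) := by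
            intro j hj
            simp only [Finset.mem_range] at hj
            by_cases h : j = a
            · simp [h]
            · rw [if_neg h, if_neg h, if_neg (by omega)]
          rw [Finset.sum_congr rfl hc, sum_subst _ a _ (Finset.mem_range.2 ha), hSp, Nat.cast_sum]
        have e2 : ∑ j ∈ Ico p n, (if j = a then (b : ZMod k) else if j = b then (a:ZMod k) else (j:ZMod k)) =
            (SI : ZMod k) - b + a := by
          have hc : ∀ j ∈ Ico p n, (if j = a then (b : ZMod k) else if j = b then (a:ZMod k) else (j:ZMod k)) =
              (if j = b then (a : ZMod k) else (j : ZMod k)) := by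
            intro j hj
            simp only [Finset.mem_Ico] at hj
            rw [if_neg (by omega)]
          rw [Finset.sum_congr rfl hc, sum_subst _ b _ (Finset.mem_Ico.2 ⟨hb1, hb2⟩), hSI, Nat.cast_sum]
        rw [e1, e2]
        have hba : (b : ZMod k) = (a : ZMod k) + d := by rw [hab]; push_cast; ring
        linear_combination hd + 2 * hba
    · -- replacement move: only in the case k = n + 1, d = n
      have hkn : k = n + 1 := by
        rcases hk with ⟨rfl, -⟩ | ⟨rfl, -⟩ | ⟨rfl, -⟩ <;> omega
      have hdn' : d = n := by omega
      rw [hdn'] at hd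
      have hnval : (n : ZMod k) = -1 := by
        have h0 : ((n + 1 : ℕ) : ZMod k) = 0 := by rw [← hkn]; exact ZMod.natCast_self k
        push_cast at h0
        linear_combination h0
      by_cases hp2 : 2 ≤ p
      · -- replace the value 1 (on the low side) by n
        refine ⟨fun i => if (i:ℕ) = 1 then ((n:ℕ) : ZMod k) else ((i:ℕ) : ZMod k), ?_, ?_⟩
        · intro i j hij
          simp only at hij
          have hi := i.isLt; have hj := j.isLt
          apply Fin.ext
          split_ifs at hij with h1 h2 h3 <;>
            first
              | omega
              | (exact absurd (castInj (by omega) (by omega) hij) (by omega))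
              | (exact absurd (castInj (by omega) (by omega) hij.symm) (by omega))
              | (exact castInj (by omega) (by omega) hij)
        · rw [sum_finlow (le_of_lt hpn) (fun x => if x = 1 then ((n:ℕ) : ZMod k) else (x : ZMod k)),
            sum_finhigh (le_of_lt hpn) (fun x => if x = 1 then ((n:ℕ) : ZMod k) else (x : ZMod k))]
          have e1 : ∑ j ∈ range p, (if j = 1 then ((n:ℕ) : ZMod k) else (j : ZMod k)) =
              (Sp : ZMod k) - 1 + (n : ZMod k) := by
            rw [sum_subst _ 1 _ (Finset.mem_range.2 (by omega)), hSp, Nat.cast_sum]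
            push_cast; ring
          have e2 : ∑ j ∈ Ico p n, (if j = 1 then ((n:ℕ) : ZMod k) else (j : ZMod k)) =
              (SI : ZMod k) := by
            rw [Finset.sum_congr rfl fun j hj => if_neg (by simp at hj; omega), hSI, Nat.cast_sum]
          rw [e1, e2]
          linear_combination hd - hnval
      · -- p = 1 : replace the value n-2 (on the high side) by n
        have hp1 : p = 1 := by omega
        refine ⟨fun i => if (i:ℕ) = n - 2 then ((n:ℕ) : ZMod k) else ((i:ℕ) : ZMod k), ?_, ?_⟩
        · intro i j hij
          simp only at hij
          have hi := i.isLt; have hj := j.isLt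
          apply Fin.ext
          split_ifs at hij with h1 h2 h3 <;>
            first
              | omega
              | (exact absurd (castInj (by omega) (by omega) hij) (by omega))
              | (exact absurd (castInj (by omega) (by omega) hij.symm) (by omega))
              | (exact castInj (by omega) (by omega) hij)
        · rw [sum_finlow (le_of_lt hpn) (fun x => if x = n - 2 then ((n:ℕ) : ZMod k) else (x : ZMod k)),
            sum_finhigh (le_of_lt hpn) (fun x => if x = n - 2 then ((n:ℕ) : ZMod k) else (x : ZMod k))]
          have e1 : ∑ j ∈ range p, (if j = n - 2 then ((n:ℕ) : ZMod k) else (j : ZMod k)) =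
              (Sp : ZMod k) := by
            rw [Finset.sum_congr rfl fun j hj => if_neg (by simp at hj; omega), hSp, Nat.cast_sum]
          have e2 : ∑ j ∈ Ico p n, (if j = n - 2 then ((n:ℕ) : ZMod k) else (j : ZMod k)) =
              (SI : ZMod k) - ((n - 2 : ℕ) : ZMod k) + (n : ZMod k) := by
            rw [sum_subst _ (n-2) _ (Finset.mem_Ico.2 ⟨by omega, by omega⟩), hSI, Nat.cast_sum]
          have e3 : ((n - 2 : ℕ) : ZMod k) = (n : ZMod k) - 2 := by
            have h1 : ((n - 2 : ℕ) : ZMod k) + ((2:ℕ) : ZMod k) = ((n : ℕ) : ZMod k) := by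
              rw [← Nat.cast_add]; congr 1; omega
            push_cast at h1
            linear_combination h1
          rw [e1, e2, e3]
          linear_combination hd - 2 * hnval
lemma exists_ord {V : Type} [Fintype V] (B : V → Prop) [DecidablePred B] (n p : ℕ)
    (hn : Fintype.card V = n) (hp : Fintype.card {v // B v} = p) :
    ∃ ord : V ≃ Fin n, ∀ v, (B v ↔ (ord v : ℕ) < p) := by
  have hple : p ≤ n := by rw [← hn, ← hp]; exact Fintype.card_subtype_le _
  have hq : Fintype.card {v // ¬ B v} = n - p := by
    rw [Fintype.card_subtype_compl, hn, hp]
  have hpq : p + (n - p) = n := by omega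
  set e1 : {v // B v} ≃ Fin p := Fintype.equivFinOfCardEq hp with he1
  set e2 : {v // ¬ B v} ≃ Fin (n - p) := Fintype.equivFinOfCardEq hq with he2
  refine ⟨(Equiv.sumCompl B).symm.trans ((e1.sumCongr e2).trans
    (finSumFinEquiv.trans (finCongr hpq))), fun v => ?_⟩
  by_cases hv : B v
  · simp only [Equiv.trans_apply]
    rw [Equiv.sumCompl_symm_apply_of_pos (p := B) hv]
    simp [hv]
  · simp only [Equiv.trans_apply]
    rw [Equiv.sumCompl_symm_apply_of_neg (p := B) hv]
    simp [hv]

variable {V : Type} [Fintype V] {A : Type} [AddCommGroup A]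

open Classical in
noncomputable def chi (x : V) (a : A) : V → A := fun t => if t = x then a else 0

def Real (G : SimpleGraph V) (w : V → A) : Prop := ∃ f : Sym2 V → A, G.wdeg f = w

variable {G : SimpleGraph V}



lemma real_zero : Real G (0 : V → A) := by
  refine ⟨0, funext fun v => ?_⟩
  simp [SimpleGraph.wdeg]

lemma real_add {w w' : V → A} (h : Real G w) (h' : Real G w') : Real G (w + w') := by
  obtain ⟨f, hf⟩ := h; obtain ⟨f', hf'⟩ := h'
  refine ⟨f + f', funext fun v => ?_⟩
  simp [SimpleGraph.wdeg, Finset.sum_add_distrib, ← hf, ← hf', Pi.add_apply, SimpleGraph.wdeg]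

lemma real_neg {w : V → A} (h : Real G w) : Real G (-w) := by
  obtain ⟨f, hf⟩ := h
  refine ⟨-f, funext fun v => ?_⟩
  simp [SimpleGraph.wdeg, ← hf]

lemma real_sub {w w' : V → A} (h : Real G w) (h' : Real G w') : Real G (w - w') := by
  rw [sub_eq_add_neg]; exact real_add h (real_neg h')

lemma real_sum {ι : Type*} (s : Finset ι) (F : ι → V → A) (h : ∀ i ∈ s, Real G (F i)) :
    Real G (∑ i ∈ s, F i) := by
  classical
  induction s using Finset.induction with
  | empty => simpa using real_zero
  | insert _ _ hx ih =>
    rw [Finset.sum_insert hx]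
    exact real_add (h _ (Finset.mem_insert_self _ _))
      (ih fun i hi => h i (Finset.mem_insert_of_mem hi))

open Classical in
lemma real_edge {x y : V} (hxy : G.Adj x y) (a : A) : Real G (chi x a + chi y a) := by
  classical
  refine ⟨fun e => if e = s(x, y) then a else 0, funext fun v => ?_⟩
  have hne : x ≠ y := G.ne_of_adj hxy
  simp only [SimpleGraph.wdeg, Pi.add_apply, chi]
  by_cases hv : v = x
  · subst hv
    have h1 : ∀ u, (if s(v, u) = s(v, y) then a else 0) = if y = u then a else 0 := by
      intro u
      have : (s(v, u) = s(v, y)) ↔ (y = u) := by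
        rw [Sym2.eq_iff]
        constructor
        · rintro (⟨-, rfl⟩ | ⟨rfl, rfl⟩) <;> rfl
        · rintro rfl; left; exact ⟨rfl, rfl⟩
      simp [this]
    rw [Finset.sum_congr rfl fun u _ => h1 u, Finset.sum_ite_eq]
    simp [hxy, hne, Ne.symm hne]
  · by_cases hv' : v = y
    · subst hv'
      have h1 : ∀ u, (if s(v, u) = s(x, v) then a else 0) = if x = u then a else 0 := by
        intro u
        have : (s(v, u) = s(x, v)) ↔ (x = u) := by
          rw [Sym2.eq_iff]
          constructor
          · rintro (⟨rfl, rfl⟩ | ⟨-, rfl⟩)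
            · exact absurd rfl hv
            · rfl
          · rintro rfl; right; exact ⟨rfl, rfl⟩
        simp [this]
      rw [Finset.sum_congr rfl fun u _ => h1 u, Finset.sum_ite_eq]
      simp [hxy.symm, hv, hne, Ne.symm hne]
    · have h1 : ∀ u, (if s(v, u) = s(x, y) then a else 0) = 0 := by
        intro u
        rw [if_neg]
        rw [Sym2.eq_iff]
        rintro (⟨rfl, rfl⟩ | ⟨rfl, rfl⟩)
        · exact hv rfl
        · exact hv' rfl
      rw [Finset.sum_congr rfl fun u _ => h1 u]
      simp [hv, hv']

lemma real_walk {u v : V} (p : G.Walk u v) (a : A) :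
    (Odd p.length → Real G (chi u a + chi v a)) ∧
    (Even p.length → Real G (chi u a - chi v a)) := by
  induction p with
  | nil =>
    constructor
    · intro h; simp at h
    · intro _; simpa using real_zero
  | @cons u x v h p ih =>
    simp only [SimpleGraph.Walk.length_cons]
    constructor
    · intro hodd
      have he : Even p.length := by
        rw [Nat.odd_iff] at hodd; rw [Nat.even_iff]; omega
      have := real_sub (real_edge h a) (ih.2 he)
      convert this using 1; abel
    · intro heven
      have ho : Odd p.length := by
        rw [Nat.even_iff] at heven; rw [Nat.odd_iff]; omega
      have := real_sub (real_edge h a) (ih.1 ho)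
      convert this using 1; abel




def EW (G : SimpleGraph V) (u v : V) : Prop := ∃ p : G.Walk u v, Even p.length
def OW (G : SimpleGraph V) (u v : V) : Prop := ∃ p : G.Walk u v, Odd p.length

lemma ow_symm {u v : V} (h : OW G u v) : OW G v u := by
  obtain ⟨p, hp⟩ := h
  exact ⟨p.reverse, by rwa [SimpleGraph.Walk.length_reverse]⟩

lemma ew_symm {u v : V} (h : EW G u v) : EW G v u := by
  obtain ⟨p, hp⟩ := h
  exact ⟨p.reverse, by rwa [SimpleGraph.Walk.length_reverse]⟩

lemma ew_trans {u v t : V} (h : EW G u v) (h' : EW G v t) : EW G u t := by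
  obtain ⟨p, hp⟩ := h; obtain ⟨q, hq⟩ := h'
  refine ⟨p.append q, ?_⟩
  rw [SimpleGraph.Walk.length_append, Nat.even_iff] at *
  omega

lemma ew_of_ow_ow {u v t : V} (h : OW G u v) (h' : OW G v t) : EW G u t := by
  obtain ⟨p, hp⟩ := h; obtain ⟨q, hq⟩ := h'
  refine ⟨p.append q, ?_⟩
  rw [SimpleGraph.Walk.length_append, Nat.even_iff]
  rw [Nat.odd_iff] at hp hq
  omega

lemma ow_of_ew_ow {u v t : V} (h : EW G u v) (h' : OW G v t) : OW G u t := by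
  obtain ⟨p, hp⟩ := h; obtain ⟨q, hq⟩ := h'
  refine ⟨p.append q, ?_⟩
  rw [SimpleGraph.Walk.length_append, Nat.odd_iff]
  rw [Nat.even_iff] at hp; rw [Nat.odd_iff] at hq
  omega

lemma ow_of_ow_ew {u v t : V} (h : OW G u v) (h' : EW G v t) : OW G u t := by
  obtain ⟨p, hp⟩ := h; obtain ⟨q, hq⟩ := h'
  refine ⟨p.append q, ?_⟩
  rw [SimpleGraph.Walk.length_append, Nat.odd_iff]
  rw [Nat.odd_iff] at hp; rw [Nat.even_iff] at hq
  omega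

/-- In a connected graph with an odd closed walk, any two vertices are joined by
walks of both parities. -/
lemma both_parities (hG : G.Connected) {u0 : V} (h0 : OW G u0 u0) :
    ∀ u v : V, EW G u v ∧ OW G u v := by
  intro u v
  obtain ⟨p1⟩ := hG.preconnected u u0
  obtain ⟨p2⟩ := hG.preconnected u0 v
  rcases Nat.even_or_odd p1.length with h1 | h1 <;>
    rcases Nat.even_or_odd p2.length with h2 | h2
  · exact ⟨ew_trans ⟨p1, h1⟩ ⟨p2, h2⟩, ow_of_ew_ow ⟨p1, h1⟩ (ow_of_ow_ew h0 ⟨p2, h2⟩)⟩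
  · exact ⟨ew_trans ⟨p1, h1⟩ (ew_of_ow_ow h0 ⟨p2, h2⟩), ow_of_ew_ow ⟨p1, h1⟩ ⟨p2, h2⟩⟩
  · exact ⟨ew_trans (ew_of_ow_ow ⟨p1, h1⟩ h0) ⟨p2, h2⟩, ow_of_ow_ew ⟨p1, h1⟩ ⟨p2, h2⟩⟩
  · exact ⟨ew_of_ow_ow ⟨p1, h1⟩ ⟨p2, h2⟩,
      ow_of_ow_ew ⟨p1, h1⟩ (ew_of_ow_ow h0 ⟨p2, h2⟩)⟩

set_option linter.unusedSectionVars false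

open Classical in
/-- Realization in the non-bipartite case. -/
lemma real_nonbip (hG : G.Connected) (hodd : ∃ u, OW G u u) (w : V → A)
    (hw : ∃ c, ∑ v, w v = c + c) : Real G w := by
  obtain ⟨u0, h0⟩ := hodd
  obtain ⟨c, hc⟩ := hw
  have hpar := both_parities hG h0
  have hr : Nonempty V := hG.nonempty
  obtain ⟨r⟩ := hr
  have hdecomp : w = (∑ v, (chi v (w v) - chi r (w v))) + (chi r c + chi r c) := by
    funext t
    simp only [Pi.add_apply, Finset.sum_apply, Pi.sub_apply, chi]
    rw [Finset.sum_sub_distrib]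
    have e1 : ∑ v, (if t = v then w v else 0) = w t := by
      rw [Finset.sum_ite_eq]; simp
    have e2 : ∑ v : V, (if t = r then w v else 0) = if t = r then c + c else 0 := by
      by_cases h : t = r <;> simp [h, hc]
    rw [e1, e2]
    by_cases h : t = r <;> simp [h]
  rw [hdecomp]
  refine real_add (real_sum _ _ fun v _ => ?_) ?_
  · exact (real_walk (hpar v r).1.choose (w v)).2 (hpar v r).1.choose_spec
  · obtain ⟨p, hp⟩ := (hpar r r).2
    exact (real_walk p c).1 hp

open Classical in
/-- Realization in the bipartite case. -/
lemma real_bip (B : V → Prop) (r y0 : V) (hr : B r) (hy0 : ¬ B y0)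
    (hsame : ∀ u v, B u → B v → EW G u v)
    (hsame' : ∀ u v, ¬ B u → ¬ B v → EW G u v)
    (hcross : OW G r y0) (w : V → A)
    (hw : ∑ v ∈ univ.filter B, w v = ∑ v ∈ univ.filter (fun v => ¬ B v), w v) :
    Real G w := by
  set S := ∑ v ∈ univ.filter B, w v with hS
  have hdecomp : w = ((∑ v ∈ univ.filter B, (chi v (w v) - chi r (w v))) +
      (∑ v ∈ univ.filter (fun v => ¬ B v), (chi v (w v) - chi y0 (w v)))) +
      (chi r S + chi y0 S) := by
    funext t
    simp only [Pi.add_apply, Finset.sum_apply, Pi.sub_apply, chi]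
    rw [Finset.sum_sub_distrib, Finset.sum_sub_distrib]
    have e1 : ∑ v ∈ univ.filter B, (if t = v then w v else 0) =
        if B t then w t else 0 := by
      rw [Finset.sum_ite_eq]; simp
    have e1' : ∑ v ∈ univ.filter (fun v => ¬ B v), (if t = v then w v else 0) =
        if ¬ B t then w t else 0 := by
      rw [Finset.sum_ite_eq]; simp
    have e2 : ∑ v ∈ univ.filter B, (if t = r then w v else 0) =
        if t = r then S else 0 := by
      by_cases h : t = r <;> simp [h, hS]
    have e2' : ∑ v ∈ univ.filter (fun v => ¬ B v), (if t = y0 then w v else 0) =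
        if t = y0 then S else 0 := by
      by_cases h : t = y0 <;> simp [h, ← hw]
    rw [e1, e1', e2, e2']
    have hry' : r ≠ y0 := fun e => hy0 (e ▸ hr)
    by_cases h1 : t = r
    · subst h1
      simp [hr, hry']
    · by_cases h2 : t = y0
      · subst h2
        simp [hy0, Ne.symm hry']
      · by_cases h : B t <;> simp [h, h1, h2]
  rw [hdecomp]
  refine real_add (real_add (real_sum _ _ fun v hv => ?_) (real_sum _ _ fun v hv => ?_)) ?_
  · have hBv : B v := by simpa using hv
    obtain ⟨p, hp⟩ := hsame v r hBv hr
    exact (real_walk p (w v)).2 hp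
  · have hBv : ¬ B v := by simpa using hv
    obtain ⟨p, hp⟩ := hsame' v y0 hBv hy0
    exact (real_walk p (w v)).2 hp
  · obtain ⟨p, hp⟩ := hcross
    exact (real_walk p S).1 hp


lemma half_odd {k : ℕ} (hko : k % 2 = 1) (s : ℕ) : ∃ c : ZMod k, (s : ZMod k) = c + c := by
  refine ⟨((k+1)/2 * s : ℕ), ?_⟩
  have h1 : 2 * ((k+1)/2) = k + 1 := by omega
  have h2 : 2 * ((k+1)/2 * s) = k * s + s := by
    calc 2 * ((k+1)/2 * s) = (2 * ((k+1)/2)) * s := by ring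
    _ = (k+1) * s := by rw [h1]
    _ = k * s + s := by ring
  have h3 : ((2 * ((k+1)/2 * s) : ℕ) : ZMod k) = ((k * s + s : ℕ) : ZMod k) := by rw [h2]
  push_cast [ZMod.natCast_self] at h3 ⊢
  linear_combination -h3

lemma half_mod4 {n : ℕ} (h4 : n % 4 = 0) (h3 : 3 ≤ n) :
    ∃ c : ZMod n, ((∑ j ∈ Finset.range n, j : ℕ) : ZMod n) = c + c := by
  set Sn : ℕ := ∑ j ∈ Finset.range n, j with hSn
  have hg : Sn * 2 = n * (n - 1) := Finset.sum_range_id_mul_two n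
  have h1 : ((n/2) * (n-1)) * 2 = n * (n - 1) := by
    have h : 2 * (n/2) = n := by omega
    calc ((n/2) * (n-1)) * 2 = (2 * (n/2)) * (n-1) := by ring
    _ = n * (n-1) := by rw [h]
  have h2 : Sn = (n/2) * (n-1) := by
    apply Nat.eq_of_mul_eq_mul_right two_pos
    rw [hg, h1]
  have h5 : 2 * ((n/4) * (n-1)) = (n/2) * (n-1) := by
    have h : 2 * (n/4) = n/2 := by omega
    calc 2 * ((n/4) * (n-1)) = (2 * (n/4)) * (n-1) := by ring
    _ = (n/2) * (n-1) := by rw [h]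
  refine ⟨((n/4) * (n-1) : ℕ), ?_⟩
  have h6 : ((2 * ((n/4) * (n-1)) : ℕ) : ZMod n) = ((Sn : ℕ) : ZMod n) := by rw [h5, h2]
  push_cast at h6 ⊢
  linear_combination -h6

/-- Main existence result: a `ZMod k`-irregular labeling of a connected graph. -/
lemma exists_irregular (hG : G.Connected) (n k : ℕ) (hn : Fintype.card V = n)
    (h3 : 3 ≤ n)
    (hk : (k = n ∧ n % 2 = 1) ∨ (k = n ∧ n % 4 = 0) ∨ (k = n + 1 ∧ n % 4 = 2)) :
    ∃ f : Sym2 V → ZMod k, G.IsIrregular f := by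
  classical
  haveI : NeZero k := ⟨by rcases hk with ⟨rfl, -⟩ | ⟨rfl, -⟩ | ⟨rfl, -⟩ <;> omega⟩
  have hnk : n ≤ k := by rcases hk with ⟨rfl, -⟩ | ⟨rfl, -⟩ | ⟨rfl, -⟩ <;> omega
  by_cases hodd : ∃ u, OW G u u
  · -- non-bipartite case
    set ord : V ≃ Fin n := Fintype.equivFinOfCardEq hn with hord
    set w : V → ZMod k := fun v => ((ord v : ℕ) : ZMod k) with hw
    have hwinj : Function.Injective w := by
      intro u v huv
      rw [hw] at huv
      exact ord.injective (Fin.ext (castInj (lt_of_lt_of_le (ord u).isLt hnk)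
        (lt_of_lt_of_le (ord v).isLt hnk) huv))
    have hsum : ∑ v, w v = ((∑ j ∈ Finset.range n, j : ℕ) : ZMod k) := by
      rw [hw]
      rw [show (∑ v, (((ord v : ℕ) : ZMod k))) = ∑ i : Fin n, ((i : ℕ) : ZMod k) from
        Equiv.sum_comp ord (fun i => ((i : ℕ) : ZMod k))]
      rw [Fin.sum_univ_eq_sum_range (fun j => ((j : ℕ) : ZMod k)) n, Nat.cast_sum]
    have hhalf : ∃ c : ZMod k, ∑ v, w v = c + c := by
      rcases hk with ⟨rfl, ho⟩ | ⟨rfl, h4⟩ | ⟨rfl, h2⟩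
      · obtain ⟨c, hc⟩ := half_odd (k := k) (by omega) (∑ j ∈ Finset.range k, j)
        exact ⟨c, by rw [hsum]; exact hc⟩
      · obtain ⟨c, hc⟩ := half_mod4 h4 h3
        exact ⟨c, by rw [hsum]; exact hc⟩
      · obtain ⟨c, hc⟩ := half_odd (k := n + 1) (by omega) (∑ j ∈ Finset.range n, j)
        exact ⟨c, by rw [hsum]; exact hc⟩
    obtain ⟨f, hf⟩ := real_nonbip hG hodd w hhalf
    exact ⟨f, by rw [SimpleGraph.IsIrregular, hf]; exact hwinj⟩
  · -- bipartite case
    push_neg at hodd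
    obtain ⟨r⟩ := hG.nonempty
    set B : V → Prop := fun v => EW G r v with hB
    have hBr : B r := ⟨SimpleGraph.Walk.nil, by simp⟩
    have hdisj : ∀ v, B v → OW G r v → False := fun v hE hO =>
      hodd r (ow_of_ew_ow hE (ow_symm hO))
    have hcover : ∀ v, ¬ B v → OW G r v := by
      intro v hv
      obtain ⟨p⟩ := hG.preconnected r v
      rcases Nat.even_or_odd p.length with h | h
      · exact absurd ⟨p, h⟩ hv
      · exact ⟨p, h⟩
    have hsame : ∀ u v, B u → B v → EW G u v := fun u v hu hv => ew_trans (ew_symm hu) hv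
    have hsame' : ∀ u v, ¬ B u → ¬ B v → EW G u v := fun u v hu hv =>
      ew_of_ow_ow (ow_symm (hcover u hu)) (hcover v hv)
    -- find a neighbor of r
    obtain ⟨v0, hv0⟩ := Fintype.exists_ne_of_one_lt_card (by omega) r
    obtain ⟨y0, hy0, hcross⟩ : ∃ y0, ¬ B y0 ∧ OW G r y0 := by
      obtain ⟨p⟩ := hG.preconnected r v0
      cases p with
      | nil => exact absurd rfl hv0
      | @cons _ x _ h q =>
        have hOx : OW G r x := ⟨SimpleGraph.Walk.cons h SimpleGraph.Walk.nil, by simp⟩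
        exact ⟨x, fun hBx => hdisj x hBx hOx, hOx⟩
    set p : ℕ := Fintype.card {v // B v} with hp
    have hp1 : 1 ≤ p := by
      rw [hp]
      exact Fintype.card_pos_iff.2 ⟨⟨r, hBr⟩⟩
    have hpn : p < n := by
      have h1 : 0 < Fintype.card {v // ¬ B v} := Fintype.card_pos_iff.2 ⟨⟨y0, hy0⟩⟩
      have h2 : Fintype.card {v // ¬ B v} = Fintype.card V - Fintype.card {v // B v} :=
        Fintype.card_subtype_compl _
      have h4 : p ≤ n := by rw [hp, ← hn]; exact Fintype.card_subtype_le _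
      omega
    obtain ⟨ord, hord⟩ := exists_ord B n p hn rfl
    obtain ⟨t, htinj, htsum⟩ := exists_target k n p h3 hp1 hpn hk
    set w : V → ZMod k := fun v => t (ord v) with hw
    have hwinj : Function.Injective w := fun u v huv => ord.injective (htinj huv)
    have hsums : ∑ v ∈ Finset.univ.filter B, w v =
        ∑ v ∈ Finset.univ.filter (fun v => ¬ B v), w v := by
      have e1 : ∑ v ∈ Finset.univ.filter B, w v =
          ∑ i ∈ Finset.univ.filter (fun i : Fin n => (i : ℕ) < p), t i := by
        refine Finset.sum_equiv ord (fun v => ?_) (fun v _ => rfl)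
        simp [hord v]
      have e2 : ∑ v ∈ Finset.univ.filter (fun v => ¬ B v), w v =
          ∑ i ∈ Finset.univ.filter (fun i : Fin n => ¬ (i : ℕ) < p), t i := by
        refine Finset.sum_equiv ord (fun v => ?_) (fun v _ => rfl)
        simp [hord v]
      rw [e1, e2, htsum]
    obtain ⟨f, hf⟩ := real_bip B r y0 hBr hy0 hsame hsame' hcross w hsums
    exact ⟨f, by rw [SimpleGraph.IsIrregular, hf]; exact hwinj⟩

/-- Lower bound: no `ZMod n`-irregular labeling exists when `n ≡ 2 (mod 4)`. -/
lemma no_irregular (G : SimpleGraph V) (n : ℕ) (hn : Fintype.card V = n)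
    (h2 : n % 4 = 2) (h3 : 3 ≤ n) :
    ¬ ∃ f : Sym2 V → ZMod n, G.IsIrregular f := by
  classical
  rintro ⟨f, hf⟩
  haveI : NeZero n := ⟨by omega⟩
  have hbij : Function.Bijective (G.wdeg f) :=
    (Fintype.bijective_iff_injective_and_card _).2 ⟨hf, by rw [hn, ZMod.card]⟩
  set Sn : ℕ := ∑ j ∈ Finset.range n, j with hSn
  -- total weighted degree equals the sum of all elements of ZMod n
  have hsum1 : ∑ v, G.wdeg f v = ∑ x : ZMod n, x :=
    Fintype.sum_bijective _ hbij _ id (fun v => rfl)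
  have hsum2 : ∑ x : ZMod n, x = ((Sn : ℕ) : ZMod n) := by
    have hb : Function.Bijective (fun i : Fin n => ((i : ℕ) : ZMod n)) := by
      refine (Fintype.bijective_iff_injective_and_card _).2 ⟨?_, by rw [ZMod.card, Fintype.card_fin]⟩
      intro i j hij
      exact Fin.ext (castInj i.isLt j.isLt hij)
    rw [← Fintype.sum_bijective _ hb (fun i => ((i : ℕ) : ZMod n)) (fun x => x) (fun i => rfl),
      Fin.sum_univ_eq_sum_range (fun j => ((j : ℕ) : ZMod n)) n, ← Nat.cast_sum]
  -- the total weighted degree is twice something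
  have hdouble : ∃ c : ZMod n, ∑ v, G.wdeg f v = c + c := by
    set P : Finset (V × V) := Finset.univ.filter (fun z => G.Adj z.1 z.2) with hP
    have step1 : ∑ v, G.wdeg f v = ∑ z ∈ P, f s(z.1, z.2) := by
      rw [hP, Finset.sum_filter, ← Finset.univ_product_univ, Finset.sum_product]
      refine Finset.sum_congr rfl fun v _ => ?_
      rw [SimpleGraph.wdeg, show (G.neighborSet v).toFinite.toFinset =
          Finset.univ.filter (fun u => G.Adj v u) from by ext u; simp, Finset.sum_filter]
    set emb := Fintype.equivFin V with hemb
    have step2 : ∑ z ∈ P.filter (fun z => ¬ emb z.1 < emb z.2), f s(z.1, z.2) =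
        ∑ z ∈ P.filter (fun z => emb z.1 < emb z.2), f s(z.1, z.2) := by
      refine Finset.sum_nbij' Prod.swap Prod.swap ?_ ?_ (fun z _ => Prod.swap_swap z)
        (fun z _ => Prod.swap_swap z) ?_
      · intro z hz
        simp only [hP, Finset.mem_filter, Finset.mem_univ, true_and] at hz ⊢
        refine ⟨hz.1.symm, ?_⟩
        have hne : emb z.1 ≠ emb z.2 := fun h => (G.ne_of_adj hz.1) (emb.injective h)
        exact lt_of_le_of_ne (not_lt.1 hz.2) hne.symm
      · intro z hz
        simp only [hP, Finset.mem_filter, Finset.mem_univ, true_and] at hz ⊢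
        refine ⟨hz.1.symm, ?_⟩
        exact not_lt.2 hz.2.le
      · intro z hz
        show f s(z.1, z.2) = f s(z.2, z.1)
        rw [Sym2.eq_swap]
    refine ⟨∑ z ∈ P.filter (fun z => emb z.1 < emb z.2), f s(z.1, z.2), ?_⟩
    rw [step1, ← Finset.sum_filter_add_sum_filter_not P (fun z => emb z.1 < emb z.2), step2]
  -- contradiction in ZMod 2
  obtain ⟨c, hc⟩ := hdouble
  have hdvd : (2 : ℕ) ∣ n := by omega
  set φ : ZMod n →+* ZMod 2 := ZMod.castHom hdvd (ZMod 2) with hφ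
  have hzero : ∀ x : ZMod 2, x + x = 0 := by decide
  have hL : φ (∑ v, G.wdeg f v) = 0 := by rw [hc, map_add, hzero]
  have hR : φ (∑ v, G.wdeg f v) = 1 := by
    rw [hsum1, hsum2, map_natCast]
    -- Sn is odd
    obtain ⟨j, hj⟩ : ∃ j, n = 4 * j + 2 := ⟨n / 4, by omega⟩
    obtain ⟨m, hm⟩ : ∃ m, m = j * j := ⟨j * j, rfl⟩
    have hg : Sn * 2 = n * (n - 1) := Finset.sum_range_id_mul_two n
    have hnn : n * (n - 1) = 2 * (8 * m + 6 * j + 1) := by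
      rw [show n - 1 = 4 * j + 1 from by omega, hj, hm]; ring
    have hSnodd : Sn % 2 = 1 := by
      rw [hnn] at hg
      omega
    calc ((Sn : ℕ) : ZMod 2) = ((Sn % 2 : ℕ) : ZMod 2) := (ZMod.natCast_mod Sn 2).symm
    _ = ((1 : ℕ) : ZMod 2) := by rw [hSnodd]
    _ = 1 := Nat.cast_one
  rw [hL] at hR
  exact absurd hR.symm (by decide)

end MEG

/-- For a connected simple graph `G` of order `n ≥ 3`, the modular edge-gracefulness
satisfies `k(G) = n` if `n ≢ 2 (mod 4)` and `k(G) = n + 1` if `n ≡ 2 (mod 4)`. -/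
theorem modularEdgeGracefulness_of_connected
    {V : Type} [Fintype V] (G : SimpleGraph V) (hG : G.Connected)
    (n : ℕ) (hn : Fintype.card V = n) (h3 : 3 ≤ n) :
    (n % 4 ≠ 2 → G.modularEdgeGracefulness = n) ∧
    (n % 4 = 2 → G.modularEdgeGracefulness = n + 1) := by
  classical
  constructor
  · intro h4
    have hk : (n = n ∧ n % 2 = 1) ∨ (n = n ∧ n % 4 = 0) ∨ (n = n + 1 ∧ n % 4 = 2) := by
      rcases Nat.even_or_odd n with he | ho
      · exact Or.inr (Or.inl ⟨rfl, by rw [Nat.even_iff] at he; omega⟩)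
      · exact Or.inl ⟨rfl, by rwa [Nat.odd_iff] at ho⟩
    have hmem : n ∈ {k : ℕ | Fintype.card V ≤ k ∧ ∃ f : Sym2 V → ZMod k, G.IsIrregular f} :=
      ⟨le_of_eq hn, MEG.exists_irregular hG n n hn h3 hk⟩
    exact le_antisymm (Nat.sInf_le hmem)
      (le_csInf ⟨n, hmem⟩ (fun b hb => hn ▸ hb.1))
  · intro h4
    have hmem : n + 1 ∈ {k : ℕ | Fintype.card V ≤ k ∧ ∃ f : Sym2 V → ZMod k, G.IsIrregular f} :=
      ⟨by omega, MEG.exists_irregular hG n (n + 1) hn h3 (Or.inr (Or.inr ⟨rfl, h4⟩))⟩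
    refine le_antisymm (Nat.sInf_le hmem) (le_csInf ⟨n + 1, hmem⟩ (fun b hb => ?_))
    obtain ⟨hb1, hb2⟩ := hb
    rw [hn] at hb1
    have hbn : b ≠ n := by
      rintro rfl
      exact MEG.no_irregular G b hn h4 h3 hb2
    omega
end

section
/- Let G be a finite simple graph of order n with n ≡ 2 (mod 4). Then for every Abelian group 𝒢 of order n there is no 𝒢-irregular labeling of G. -/
open Finset

lemma sum_wdeg_double {V : Type} [Fintype V] (G : SimpleGraph V)
    {A : Type} [AddCommGroup A] (f : Sym2 V → A) :
    ∃ x : A, ∑ v, G.wdeg f v = x + x := by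
  classical
  let e := Fintype.equivFin V
  set g : V × V → A := fun p => if G.Adj p.1 p.2 then f s(p.1, p.2) else 0 with hg
  have hsym : ∀ p : V × V, g (p.2, p.1) = g p := by
    intro p
    simp only [hg]
    by_cases h : G.Adj p.1 p.2
    · rw [if_pos h.symm, if_pos h, Sym2.eq_swap]
    · rw [if_neg h, if_neg fun h' => h h'.symm]
  have hdiag : ∀ p : V × V, p.1 = p.2 → g p = 0 := by
    intro p hp
    simp only [hg]
    exact if_neg fun h => G.irrefl (hp ▸ h)
  have h1 : ∑ v, G.wdeg f v = ∑ p : V × V, g p := by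
    rw [Fintype.sum_prod_type]
    refine Finset.sum_congr rfl fun v _ => ?_
    rw [SimpleGraph.wdeg]
    rw [show (G.neighborSet v).toFinite.toFinset
        = Finset.univ.filter (fun u => G.Adj v u) by
      ext u; simp [Set.Finite.mem_toFinset]]
    rw [Finset.sum_filter]
  refine ⟨∑ p ∈ Finset.univ.filter (fun p : V × V => e p.1 < e p.2), g p, ?_⟩
  rw [h1, ← Finset.sum_filter_add_sum_filter_not Finset.univ
    (fun p : V × V => e p.1 < e p.2) g]
  congr 1
  have hsub : ∑ p ∈ Finset.univ.filter (fun p : V × V => ¬ e p.1 < e p.2), g p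
      = ∑ p ∈ Finset.univ.filter (fun p : V × V => e p.2 < e p.1), g p := by
    refine (Finset.sum_subset ?_ ?_).symm
    · intro p hp
      simp only [Finset.mem_filter, Finset.mem_univ, true_and] at hp ⊢
      exact not_lt_of_gt hp
    · intro p hin hp
      simp only [Finset.mem_filter, Finset.mem_univ, true_and, not_lt] at hin hp
      exact hdiag p (e.injective (le_antisymm hp hin))
  rw [hsub]
  refine Finset.sum_nbij' (fun p : V × V => (p.2, p.1)) (fun p : V × V => (p.2, p.1))
    ?_ ?_ ?_ ?_ ?_
  · intro p hp
    simpa using (Finset.mem_filter.mp hp).2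
  · intro p hp
    simpa using (Finset.mem_filter.mp hp).2
  · intro p _; rfl
  · intro p _; rfl
  · intro p _; exact (hsym p).symm

lemma sum_univ_eq_two_torsion_elt {A : Type} [AddCommGroup A] [Fintype A]
    {n : ℕ} (hA : Fintype.card A = n) (h2 : n % 4 = 2) :
    ∃ t : A, t ≠ 0 ∧ t + t = 0 ∧ ∑ a : A, a = t := by
  classical
  haveI : Fact (Nat.Prime 2) := ⟨Nat.prime_two⟩
  obtain ⟨t, ht⟩ := exists_prime_addOrderOf_dvd_card (G := A) 2 (by rw [hA]; omega)
  have ht2 : t + t = 0 := by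
    have := addOrderOf_nsmul_eq_zero t
    rw [ht, two_nsmul] at this
    exact this
  have ht0 : t ≠ 0 := by
    intro h
    rw [h, addOrderOf_zero] at ht
    omega
  -- the 2-torsion subgroup
  set H : AddSubgroup A :=
    { carrier := {x : A | x + x = 0}
      zero_mem' := by simp
      add_mem' := by
        intro a b ha hb
        simp only [Set.mem_setOf_eq] at *
        rw [add_add_add_comm, ha, hb, add_zero]
      neg_mem' := by
        intro a ha
        simp only [Set.mem_setOf_eq] at *
        rw [← neg_add, ha, neg_zero] } with hH
  have key : ∀ a : A, a + a = 0 → a = 0 ∨ a = t := by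
    by_contra hcon
    push_neg at hcon
    obtain ⟨a, haa, ha0, hat⟩ := hcon
    -- card H ≥ 3
    have hcard3 : 2 < Fintype.card H := by
      rw [Fintype.two_lt_card_iff]
      refine ⟨⟨0, by simp [hH]⟩, ⟨t, by simpa [hH] using ht2⟩, ⟨a, by simpa [hH] using haa⟩,
        ?_, ?_, ?_⟩
      · exact fun h => ht0 (congrArg Subtype.val h).symm
      · exact fun h => ha0 (congrArg Subtype.val h).symm
      · exact fun h => hat (congrArg Subtype.val h).symm
    -- all prime factors of card H are 2
    have hprimes : ∀ p : ℕ, p.Prime → p ∣ Fintype.card H → p = 2 := by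
      intro p hp hpd
      haveI : Fact p.Prime := ⟨hp⟩
      obtain ⟨x, hx⟩ := exists_prime_addOrderOf_dvd_card (G := H) p hpd
      have hx2 : (2 : ℕ) • x = 0 := by
        have hxA : (x : A) + (x : A) = 0 := x.2
        apply Subtype.ext
        push_cast [two_nsmul]
        exact hxA
      have := addOrderOf_dvd_of_nsmul_eq_zero hx2
      rw [hx] at this
      exact (Nat.prime_dvd_prime_iff_eq hp Nat.prime_two).mp this
    have hdvd : Fintype.card H ∣ n := by
      have := AddSubgroup.card_addSubgroup_dvd_card H
      rwa [Nat.card_eq_fintype_card, Nat.card_eq_fintype_card, hA] at this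
    set m := Fintype.card H with hm
    have h2m : 2 ∣ m := by
      have hmf : m.minFac ∣ m := Nat.minFac_dvd m
      have h := hprimes m.minFac (Nat.minFac_prime (by omega)) hmf
      rw [h] at hmf
      exact hmf
    have h2m2 : 2 ∣ m / 2 := by
      have hge : 2 ≤ m / 2 := by omega
      have hmf : (m / 2).minFac ∣ m / 2 := Nat.minFac_dvd _
      have hq := hprimes (m / 2).minFac (Nat.minFac_prime (by omega))
        (hmf.trans (Nat.div_dvd_of_dvd h2m))
      rw [hq] at hmf
      exact hmf
    have h4 : 4 ∣ m := by omega
    have : 4 ∣ n := h4.trans hdvd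
    omega
  refine ⟨t, ht0, ht2, ?_⟩
  have hsplit : ∑ a : A, a
      = ∑ a ∈ Finset.univ.filter (fun a : A => a + a = 0), a := by
    rw [← Finset.sum_filter_add_sum_filter_not Finset.univ (fun a : A => a + a = 0)
      (fun a => a)]
    have : ∑ a ∈ Finset.univ.filter (fun a : A => ¬ a + a = 0), a = 0 := by
      refine Finset.sum_involution (fun a _ => -a) ?_ ?_ ?_ (fun a ha => neg_neg a)
      · intro a _
        exact add_neg_cancel a
      · intro a ha _ h
        have hmem := Finset.mem_filter.mp ha
        have h' : a + a = 0 := by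
          have h2' := congrArg (· + a) h
          simp only [neg_add_cancel] at h2'
          exact h2'.symm
        exact hmem.2 h'
      · intro a ha
        simp only [Finset.mem_filter, Finset.mem_univ, true_and] at ha ⊢
        intro h
        apply ha
        have h' : -(a + a) = 0 := by rw [neg_add]; exact h
        rwa [neg_eq_zero] at h'
    rw [this, add_zero]
  have hset : Finset.univ.filter (fun a : A => a + a = 0) = {0, t} := by
    ext a
    simp only [Finset.mem_filter, Finset.mem_univ, true_and, Finset.mem_insert,
      Finset.mem_singleton]
    constructor
    · exact key a
    · rintro (rfl | rfl)
      · simp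
      · exact ht2
  rw [hsplit, hset, Finset.sum_pair (Ne.symm ht0), zero_add]

/-- If `G` is a finite simple graph of order `n` with `n ≡ 2 (mod 4)`, then for every
Abelian group `A` of order `n` there is no `A`-irregular labeling of `G`. -/
theorem no_irregular_labeling_of_card_two_mod_four
    {V : Type} [Fintype V] (G : SimpleGraph V) (n : ℕ)
    (hn : Fintype.card V = n) (h2 : n % 4 = 2)
    (A : Type) [AddCommGroup A] [Fintype A] (hA : Fintype.card A = n) :
    ¬ ∃ f : Sym2 V → A, G.IsIrregular f := by
  classical
  rintro ⟨f, hf⟩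
  obtain ⟨t, ht0, ht2, htsum⟩ := sum_univ_eq_two_torsion_elt hA h2
  obtain ⟨x, hx⟩ := sum_wdeg_double G f
  have hbij : Function.Bijective (G.wdeg f) :=
    (Fintype.bijective_iff_injective_and_card _).mpr ⟨hf, by rw [hn, hA]⟩
  have hsum : ∑ v, G.wdeg f v = ∑ a : A, a :=
    Fintype.sum_bijective (G.wdeg f) hbij _ _ (fun v => rfl)
  have htx : t = x + x := by rw [← hx, hsum, htsum]
  -- n = 2 * m with m odd
  obtain ⟨k, hk⟩ : ∃ k, n = 4 * k + 2 := ⟨n / 4, by omega⟩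
  have hmt : (2 * k + 1) • t = t := by
    have h0 : k • t + k • t = 0 := by rw [← smul_add, ht2, smul_zero]
    rw [succ_nsmul, two_mul, add_nsmul, h0, zero_add]
  have hnx : ((2 * k + 1) + (2 * k + 1)) • x = 0 := by
    have hkn : (2 * k + 1) + (2 * k + 1) = n := by omega
    rw [hkn, ← hA, card_nsmul_eq_zero]
  have : t = 0 := by
    calc t = (2 * k + 1) • t := hmt.symm
    _ = (2 * k + 1) • (x + x) := by rw [htx]
    _ = (2 * k + 1) • x + (2 * k + 1) • x := by rw [smul_add]
    _ = ((2 * k + 1) + (2 * k + 1)) • x := by rw [← add_nsmul]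
    _ = 0 := hnx
  exact ht0 this
end

section
/- Let G be a finite simple graph of order n with no connected component of order less than 3 and such that every bipartite component of G has both color classes of even order. Let s = n + 1 if n ≡ 2 (mod 4) and s = n otherwise. Then for every integer t ≥ s and every Abelian group 𝒢 of order t having at most one involution, there exists a 𝒢-irregular labeling of G. -/
open SimpleGraph Finset

set_option linter.unusedSectionVars false

variable {V : Type} [Fintype V] [DecidableEq V] {G : SimpleGraph V} {A : Type} [AddCommGroup A]

lemma wdeg_add (f g : Sym2 V → A) : G.wdeg (f + g) = G.wdeg f + G.wdeg g := by
  funext v; simp [SimpleGraph.wdeg, Finset.sum_add_distrib]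

lemma wdeg_neg (f : Sym2 V → A) : G.wdeg (-f) = - (G.wdeg f) := by
  funext v; simp [SimpleGraph.wdeg]

/-- The subgroup of realizable weight functions. -/
noncomputable def realizable (G : SimpleGraph V) (A : Type) [AddCommGroup A] :
    AddSubgroup (V → A) where
  carrier := {w | ∃ f : Sym2 V → A, G.wdeg f = w}
  zero_mem' := ⟨0, by funext v; simp [SimpleGraph.wdeg]⟩
  add_mem' := by rintro w₁ w₂ ⟨f₁, h₁⟩ ⟨f₂, h₂⟩; exact ⟨f₁ + f₂, by rw [wdeg_add, h₁, h₂]⟩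
  neg_mem' := by rintro w ⟨f, h⟩; exact ⟨-f, by rw [wdeg_neg, h]⟩

open scoped Classical in
noncomputable def edgeLab (a b : V) (g : A) : Sym2 V → A := fun e => if e = s(a,b) then g else 0

lemma wdeg_edgeLab {a b : V} (h : G.Adj a b) (g : A) :
    G.wdeg (edgeLab a b g) = Pi.single a g + Pi.single b g := by
  classical
  have hab : a ≠ b := h.ne
  funext v
  by_cases hva : v = a
  · subst hva
    have he : ∀ u : V, (edgeLab v b g s(v, u)) = if u = b then g else 0 := by
      intro u
      simp only [edgeLab, Sym2.eq_iff]
      by_cases hu : u = b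
      · simp [hu]
      · simp [hu]; tauto
    simp only [SimpleGraph.wdeg, he]
    rw [Finset.sum_ite_eq' _ b (fun _ => g)]
    have hb : b ∈ (G.neighborSet v).toFinite.toFinset := by
      simp [Set.Finite.mem_toFinset, h]
    simp [hb, h, Pi.single_eq_same, Pi.single_eq_of_ne hab]
  · by_cases hvb : v = b
    · subst hvb
      have he : ∀ u : V, (edgeLab a v g s(v, u)) = if u = a then g else 0 := by
        intro u
        simp only [edgeLab, Sym2.eq_iff]
        by_cases hu : u = a
        · simp [hu]
        · simp [hu]; tauto
      simp only [SimpleGraph.wdeg, he]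
      rw [Finset.sum_ite_eq' _ a (fun _ => g)]
      have ha : a ∈ (G.neighborSet v).toFinite.toFinset := by
        simp [Set.Finite.mem_toFinset]; exact h.symm
      simp [ha, h.symm, Pi.single_eq_same, Pi.single_eq_of_ne hva]
    · have he : ∀ u : V, (edgeLab a b g s(v, u)) = 0 := by
        intro u
        simp only [edgeLab, Sym2.eq_iff]
        have : ¬ ((v = a ∧ u = b) ∨ (v = b ∧ u = a)) := by tauto
        simp [this]
      simp only [SimpleGraph.wdeg, he]
      simp [Pi.single_eq_of_ne hva, Pi.single_eq_of_ne hvb]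

noncomputable def walkLab (g : A) : {u v : V} → G.Walk u v → (Sym2 V → A)
  | _, _, .nil => 0
  | u, _, .cons (v := w) _ p => edgeLab u w g + walkLab (-g) p

lemma wdeg_walkLab {u v : V} (p : G.Walk u v) (g : A) :
    G.wdeg (walkLab g p) = Pi.single u g + Pi.single v (if Even p.length then -g else g) := by
  induction p generalizing g with
  | nil =>
    show G.wdeg 0 = _
    have : G.wdeg (0 : Sym2 V → A) = 0 := by funext x; simp [SimpleGraph.wdeg]
    rw [this]
    simp [← Pi.single_add]
  | @cons u w v h p ih =>
    show G.wdeg (edgeLab u w g + walkLab (-g) p) = _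
    rw [wdeg_add, wdeg_edgeLab h, ih]
    have hlen : (SimpleGraph.Walk.cons h p).length = p.length + 1 := rfl
    rw [hlen]
    have hcancel : Pi.single w g + Pi.single w (-g) = (0 : V → A) := by
      rw [← Pi.single_add]; simp
    by_cases hp : Even p.length
    · have h1 : ¬ Even (p.length + 1) := by simp [Nat.even_add_one, hp]
      rw [if_neg h1, if_pos hp, neg_neg, add_assoc]
      nth_rewrite 2 [← add_assoc]
      rw [hcancel, zero_add]
    · have h1 : Even (p.length + 1) := by simp [Nat.even_add_one, hp]
      rw [if_pos h1, if_neg hp, add_assoc]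
      nth_rewrite 2 [← add_assoc]
      rw [hcancel, zero_add]
lemma mem_realizable_of_odd_walk {u v : V} (p : G.Walk u v) (hodd : ¬ Even p.length) (g : A) :
    Pi.single u g + Pi.single v g ∈ realizable G A :=
  ⟨walkLab g p, by rw [wdeg_walkLab, if_neg hodd]⟩

lemma mem_realizable_of_even_walk {u v : V} (p : G.Walk u v) (heven : Even p.length) (g : A) :
    Pi.single u g - Pi.single v g ∈ realizable G A :=
  ⟨walkLab g p, by rw [wdeg_walkLab, if_pos heven]; simp [sub_eq_add_neg, Pi.single_neg]⟩

lemma supp_of_adj {c : G.ConnectedComponent} {u w : V} (hu : u ∈ c.supp) (h : G.Adj u w) :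
    w ∈ c.supp := by
  rw [SimpleGraph.ConnectedComponent.mem_supp_iff] at hu ⊢
  rw [← hu]
  exact SimpleGraph.ConnectedComponent.sound h.symm.reachable

lemma walk_of_supp {c : G.ConnectedComponent} {u v : V} (hu : u ∈ c.supp) (hv : v ∈ c.supp) :
    Nonempty (G.Walk u v) := by
  rw [SimpleGraph.ConnectedComponent.mem_supp_iff] at hu hv
  exact SimpleGraph.ConnectedComponent.exact (hu.trans hv.symm)

lemma bipartition_walk_parity {c : G.ConnectedComponent} {X Y : Set V}
    (hXY : G.IsComponentBipartition c X Y) {u v : V} (p : G.Walk u v) (hu : u ∈ c.supp) :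
    (u ∈ X → (if Even p.length then v ∈ X else v ∈ Y)) ∧
    (u ∈ Y → (if Even p.length then v ∈ Y else v ∈ X)) := by
  induction p with
  | nil => intros; simpa using ⟨fun h => h, fun h => h⟩
  | @cons u w v h q ih =>
    have hw : w ∈ c.supp := supp_of_adj hu h
    have hedge := hXY.2.2 u w hu hw h
    have ihw := ih hw
    have hdisj := hXY.2.1
    constructor
    · intro huX
      rcases hedge with ⟨-, hwY⟩ | ⟨huY, -⟩
      · have := ihw.2 hwY
        simp only [SimpleGraph.Walk.length_cons, Nat.even_add_one]
        by_cases hq : Even q.length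
        · simp only [hq, if_true, if_neg (not_not.2 hq)] at this ⊢; exact this
        · simp only [hq, if_false, if_pos, not_false_iff] at this ⊢; exact this
      · exact absurd huY (Set.disjoint_left.1 hdisj huX)
    · intro huY
      rcases hedge with ⟨huX, -⟩ | ⟨-, hwX⟩
      · exact absurd huY (Set.disjoint_left.1 hdisj huX)
      · have := ihw.1 hwX
        simp only [SimpleGraph.Walk.length_cons, Nat.even_add_one]
        by_cases hq : Even q.length
        · simp only [hq, if_true, if_neg (not_not.2 hq)] at this ⊢; exact this
        · simp only [hq, if_false, if_pos, not_false_iff] at this ⊢; exact this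

lemma X_subset_supp {c : G.ConnectedComponent} {X Y : Set V}
    (hXY : G.IsComponentBipartition c X Y) : X ⊆ c.supp := fun x hx => by
  rw [← hXY.1]; exact Or.inl hx

lemma Y_subset_supp {c : G.ConnectedComponent} {X Y : Set V}
    (hXY : G.IsComponentBipartition c X Y) : Y ⊆ c.supp := fun x hx => by
  rw [← hXY.1]; exact Or.inr hx

lemma even_of_XX {c : G.ConnectedComponent} {X Y : Set V}
    (hXY : G.IsComponentBipartition c X Y) {u v : V} (hu : u ∈ X) (hv : v ∈ X)
    (p : G.Walk u v) : Even p.length := by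
  have := (bipartition_walk_parity hXY p (X_subset_supp hXY hu)).1 hu
  by_contra hodd
  rw [if_neg hodd] at this
  exact Set.disjoint_left.1 hXY.2.1 hv this

lemma odd_of_XY {c : G.ConnectedComponent} {X Y : Set V}
    (hXY : G.IsComponentBipartition c X Y) {u v : V} (hu : u ∈ X) (hv : v ∈ Y)
    (p : G.Walk u v) : ¬ Even p.length := by
  have := (bipartition_walk_parity hXY p (X_subset_supp hXY hu)).1 hu
  intro heven
  rw [if_pos heven] at this
  exact Set.disjoint_left.1 hXY.2.1 this hv

lemma exists_odd_closed_walk {c : G.ConnectedComponent}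
    (hnb : ¬ ∃ X Y : Set V, G.IsComponentBipartition c X Y)
    {v0 : V} (hv0 : v0 ∈ c.supp) : ∃ p : G.Walk v0 v0, ¬ Even p.length := by
  by_contra hno
  push_neg at hno
  apply hnb
  refine ⟨{v | v ∈ c.supp ∧ ∃ p : G.Walk v0 v, Even p.length},
          {v | v ∈ c.supp ∧ ∃ p : G.Walk v0 v, ¬ Even p.length}, ?_, ?_, ?_⟩
  · apply Set.Subset.antisymm
    · rintro v (⟨hv, -⟩ | ⟨hv, -⟩) <;> exact hv
    · intro v hv
      obtain ⟨p⟩ := walk_of_supp hv0 hv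
      by_cases hp : Even p.length
      · exact Or.inl ⟨hv, p, hp⟩
      · exact Or.inr ⟨hv, p, hp⟩
  · rw [Set.disjoint_left]
    rintro v ⟨hv, p, hp⟩ ⟨-, q, hq⟩
    have hlen : (p.append q.reverse).length = p.length + q.length := by
      rw [SimpleGraph.Walk.length_append, SimpleGraph.Walk.length_reverse]
    have := hno (p.append q.reverse)
    rw [hlen, Nat.even_add] at this
    exact hq (this.1 hp)
  · intro u v hu hv huv
    obtain ⟨p⟩ := walk_of_supp hv0 hu
    have hq : (p.append (SimpleGraph.Walk.cons huv SimpleGraph.Walk.nil)).length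
        = p.length + 1 := by
      rw [SimpleGraph.Walk.length_append]; rfl
    by_cases hp : Even p.length
    · refine Or.inl ⟨⟨hu, p, hp⟩, hv, p.append (SimpleGraph.Walk.cons huv SimpleGraph.Walk.nil), ?_⟩
      rw [hq, Nat.even_add_one]; exact not_not.2 hp
    · refine Or.inr ⟨⟨hu, p, hp⟩, hv, p.append (SimpleGraph.Walk.cons huv SimpleGraph.Walk.nil), ?_⟩
      rw [hq, Nat.even_add_one]; exact hp

lemma nonbip_walks {c : G.ConnectedComponent}
    (hnb : ¬ ∃ X Y : Set V, G.IsComponentBipartition c X Y)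
    {u v0 : V} (hu : u ∈ c.supp) (hv0 : v0 ∈ c.supp) :
    (∃ p : G.Walk u v0, Even p.length) ∧ (∃ p : G.Walk u v0, ¬ Even p.length) := by
  obtain ⟨q⟩ := walk_of_supp hu hv0
  obtain ⟨r, hr⟩ := exists_odd_closed_walk hnb hv0
  have hlen : (q.append r).length = q.length + r.length := SimpleGraph.Walk.length_append q r
  by_cases hq : Even q.length
  · refine ⟨⟨q, hq⟩, q.append r, ?_⟩
    rw [hlen, Nat.even_add]
    intro h; exact hr (h.1 hq)
  · refine ⟨⟨q.append r, ?_⟩, q, hq⟩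
    rw [hlen, Nat.even_add]
    constructor
    · intro h; exact absurd h hq
    · intro h; exact absurd h hr

lemma odd_of_YX {c : G.ConnectedComponent} {X Y : Set V}
    (hXY : G.IsComponentBipartition c X Y) {u v : V} (hu : u ∈ Y) (hv : v ∈ X)
    (p : G.Walk u v) : ¬ Even p.length := by
  have := (bipartition_walk_parity hXY p (Y_subset_supp hXY hu)).2 hu
  intro heven
  rw [if_pos heven] at this
  exact Set.disjoint_left.1 hXY.2.1 hv this

lemma exists_adj_in_supp {c : G.ConnectedComponent} (h3 : 3 ≤ c.supp.ncard) :
    ∃ u v : V, u ∈ c.supp ∧ v ∈ c.supp ∧ G.Adj u v := by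
  have h1 : 1 < c.supp.ncard := by omega
  rw [Set.one_lt_ncard (c.supp.toFinite)] at h1
  obtain ⟨u, hu, v, hv, huv⟩ := h1
  obtain ⟨p⟩ := walk_of_supp hu hv
  cases p with
  | nil => exact absurd rfl huv
  | cons h q => exact ⟨_, _, hu, supp_of_adj hu h, h⟩

noncomputable instance : Fintype (G.ConnectedComponent) := Fintype.ofFinite _

open scoped Classical in
lemma sum_single_eq {S : Finset V} (w : V → A) :
    ∑ u ∈ S, Pi.single u (w u) = (fun v => if v ∈ S then w v else 0) := by
  funext v
  rw [Finset.sum_apply]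
  have : ∀ u ∈ S, (Pi.single u (w u) : V → A) v = if v = u then w u else 0 := by
    intro u _; rw [Pi.single_apply]
  rw [Finset.sum_congr rfl this, Finset.sum_ite_eq]

open scoped Classical in
lemma single_sum_eq (v0 : V) {S : Finset V} (w : V → A) :
    ∑ u ∈ S, (Pi.single v0 (w u) : V → A) = Pi.single v0 (∑ u ∈ S, w u) := by
  classical
  funext v
  rw [Finset.sum_apply]
  by_cases hv : v = v0
  · subst hv; simp [Pi.single_eq_same]
  · simp [Pi.single_eq_of_ne hv]

open scoped Classical in
lemma wc_mem_of_bip {c : G.ConnectedComponent} {X Y : Set V}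
    (hXY : G.IsComponentBipartition c X Y) (h3 : 3 ≤ c.supp.ncard) (w : V → A)
    (hsum : ∑ u ∈ X.toFinite.toFinset, w u = ∑ u ∈ Y.toFinite.toFinset, w u) :
    (fun v => if v ∈ c.supp then w v else 0) ∈ realizable G A := by
  classical
  obtain ⟨a, b, ha, hb, hab⟩ := exists_adj_in_supp h3
  have hedge := hXY.2.2 a b ha hb hab
  have hXne : ∃ x, x ∈ X := by rcases hedge with ⟨h1, _⟩ | ⟨_, h2⟩; exacts [⟨a, h1⟩, ⟨b, h2⟩]
  obtain ⟨v0, hv0⟩ := hXne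
  set Xf := X.toFinite.toFinset with hXf
  set Yf := Y.toFinite.toFinset with hYf
  have hmemX : ∀ u, u ∈ Xf ↔ u ∈ X := fun u => Set.Finite.mem_toFinset _
  have hmemY : ∀ u, u ∈ Yf ↔ u ∈ Y := fun u => Set.Finite.mem_toFinset _
  have hdisj : Disjoint Xf Yf := by
    rw [Finset.disjoint_left]
    intro x hx hy
    exact Set.disjoint_left.1 hXY.2.1 ((hmemX x).1 hx) ((hmemY x).1 hy)
  have hsingle : ∑ u ∈ Xf ∪ Yf, Pi.single u (w u)
      = (fun v => if v ∈ c.supp then w v else 0) := by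
    rw [sum_single_eq]
    funext v
    have : v ∈ Xf ∪ Yf ↔ v ∈ c.supp := by
      rw [Finset.mem_union, hmemX, hmemY, ← Set.mem_union, hXY.1]
    by_cases hv : v ∈ c.supp
    · rw [if_pos hv, if_pos (this.2 hv)]
    · rw [if_neg hv, if_neg (fun hc => hv (this.1 hc))]
  have key : (fun v => if v ∈ c.supp then w v else 0)
      = (∑ u ∈ Xf, (Pi.single u (w u) - Pi.single v0 (w u)))
      + (∑ u ∈ Yf, (Pi.single u (w u) + Pi.single v0 (w u))) := by
    rw [Finset.sum_sub_distrib, Finset.sum_add_distrib, single_sum_eq, single_sum_eq,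
      hsum, ← hsingle, Finset.sum_union hdisj]
    abel
  rw [key]
  apply AddSubgroup.add_mem
  · apply AddSubgroup.sum_mem
    intro u hu
    obtain ⟨p⟩ := walk_of_supp (X_subset_supp hXY ((hmemX u).1 hu)) (X_subset_supp hXY hv0)
    exact mem_realizable_of_even_walk p (even_of_XX hXY ((hmemX u).1 hu) hv0 p) (w u)
  · apply AddSubgroup.sum_mem
    intro u hu
    obtain ⟨p⟩ := walk_of_supp (Y_subset_supp hXY ((hmemY u).1 hu)) (X_subset_supp hXY hv0)
    exact mem_realizable_of_odd_walk p (odd_of_YX hXY ((hmemY u).1 hu) hv0 p) (w u)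

open scoped Classical in
lemma wc_mem_of_nonbip {c : G.ConnectedComponent}
    (hnb : ¬ ∃ X Y : Set V, G.IsComponentBipartition c X Y) (w : V → A)
    (hsum : ∃ a : A, ∑ u ∈ c.supp.toFinite.toFinset, w u = a + a) :
    (fun v => if v ∈ c.supp then w v else 0) ∈ realizable G A := by
  classical
  obtain ⟨v0, hv0⟩ := c.exists_rep
  have hv0' : v0 ∈ c.supp := by
    rw [SimpleGraph.ConnectedComponent.mem_supp_iff]; exact hv0
  obtain ⟨a, hsum⟩ := hsum
  set Sf := c.supp.toFinite.toFinset with hSf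
  have hmemS : ∀ u, u ∈ Sf ↔ u ∈ c.supp := fun u => Set.Finite.mem_toFinset _
  have hsingle : ∑ u ∈ Sf, Pi.single u (w u)
      = (fun v => if v ∈ c.supp then w v else 0) := by
    rw [sum_single_eq]
    funext v
    by_cases hv : v ∈ c.supp
    · rw [if_pos hv, if_pos ((hmemS v).2 hv)]
    · rw [if_neg hv, if_neg (fun hc => hv ((hmemS v).1 hc))]
  have key : (fun v => if v ∈ c.supp then w v else 0)
      = (∑ u ∈ Sf, (Pi.single u (w u) - Pi.single v0 (w u)))
      + Pi.single v0 (∑ u ∈ Sf, w u) := by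
    rw [Finset.sum_sub_distrib, single_sum_eq, ← hsingle]
    abel
  rw [key]
  apply AddSubgroup.add_mem
  · apply AddSubgroup.sum_mem
    intro u hu
    obtain ⟨p, hp⟩ := (nonbip_walks hnb ((hmemS u).1 hu) hv0').1
    exact mem_realizable_of_even_walk p hp (w u)
  · rw [hsum, Pi.single_add]
    obtain ⟨p, hp⟩ := exists_odd_closed_walk hnb hv0'
    exact mem_realizable_of_odd_walk p hp a

open scoped Classical in
lemma realizable_of_conditions (w : V → A)
    (hcomp : ∀ c : G.ConnectedComponent, 3 ≤ c.supp.ncard)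
    (hcond : ∀ c : G.ConnectedComponent,
      (∃ X Y : Set V, G.IsComponentBipartition c X Y ∧
        ∑ u ∈ X.toFinite.toFinset, w u = ∑ u ∈ Y.toFinite.toFinset, w u) ∨
      ((¬ ∃ X Y : Set V, G.IsComponentBipartition c X Y) ∧
        ∃ a : A, ∑ u ∈ c.supp.toFinite.toFinset, w u = a + a)) :
    ∃ f : Sym2 V → A, G.wdeg f = w := by
  classical
  have hdecomp : w = ∑ c : G.ConnectedComponent,
      (fun v => if v ∈ c.supp then w v else 0) := by
    funext v
    rw [Finset.sum_apply]
    have : ∀ c ∈ (Finset.univ : Finset G.ConnectedComponent),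
        (fun v => if v ∈ c.supp then w v else 0) v
          = if G.connectedComponentMk v = c then w v else 0 := by
      intro c _
      simp only [SimpleGraph.ConnectedComponent.mem_supp_iff]
    rw [Finset.sum_congr rfl this, Finset.sum_ite_eq]
    simp
  have : w ∈ realizable G A := by
    rw [hdecomp]
    apply AddSubgroup.sum_mem
    intro c _
    rcases hcond c with ⟨X, Y, hXY, hsum⟩ | ⟨hnb, hsum⟩
    · exact wc_mem_of_bip hXY (hcomp c) w hsum
    · exact wc_mem_of_nonbip hnb w hsum
  exact this

/-! ### Group-theoretic lemmas -/

section GroupLemmas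

variable (B : Type) [AddCommGroup B] [Fintype B]

open scoped Classical

/-- the doubling homomorphism -/
noncomputable def dbl : B →+ B where
  toFun := fun a => a + a
  map_zero' := by simp
  map_add' := by intro a b; abel

noncomputable def Kf : Finset B := Finset.univ.filter (fun a => a ∈ (dbl B).range)

variable {B}

lemma mem_Kf {a : B} : a ∈ Kf B ↔ ∃ b : B, b + b = a := by
  simp [Kf, AddMonoidHom.mem_range, dbl]

lemma Kf_negclosed {a : B} (ha : a ∈ Kf B) : -a ∈ Kf B := by
  rw [mem_Kf] at ha ⊢
  obtain ⟨b, hb⟩ := ha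
  exact ⟨-b, by rw [← hb]; abel⟩

lemma exists_involution (ht : Even (Fintype.card B)) :
    ∃ i : B, i ≠ 0 ∧ i + i = 0 := by
  have : Fact (Nat.Prime 2) := ⟨Nat.prime_two⟩
  obtain ⟨x, hx⟩ := exists_prime_addOrderOf_dvd_card (G := B) 2 (even_iff_two_dvd.mp ht)
  refine ⟨x, ?_, ?_⟩
  · intro h0; rw [h0] at hx; simp at hx
  · have := addOrderOf_nsmul_eq_zero x
    rw [hx] at this
    rwa [two_nsmul] at this

lemma no_involution_of_odd (ht : ¬ Even (Fintype.card B)) :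
    ∀ x : B, x + x = 0 → x = 0 := by
  intro x hx
  by_contra h0
  have h2 : addOrderOf x = 2 := by
    have hdvd : addOrderOf x ∣ 2 := by
      apply addOrderOf_dvd_of_nsmul_eq_zero
      rwa [two_nsmul]
    rcases (Nat.dvd_prime Nat.prime_two).mp hdvd with h | h
    · exfalso
      have := addOrderOf_nsmul_eq_zero x
      rw [h, one_nsmul] at this
      exact h0 this
    · exact h
  have : (2 : ℕ) ∣ Fintype.card B := h2 ▸ addOrderOf_dvd_card
  exact ht (even_iff_two_dvd.mpr this)

lemma Kf_eq_univ_of_odd (ht : ¬ Even (Fintype.card B)) : Kf B = Finset.univ := by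
  have hinj : Function.Injective (dbl B) := by
    rw [injective_iff_map_eq_zero]
    intro a ha
    exact no_involution_of_odd ht a ha
  have hsurj : Function.Surjective (dbl B) := Finite.surjective_of_injective hinj
  apply Finset.eq_univ_of_forall
  intro a
  rw [mem_Kf]
  obtain ⟨b, hb⟩ := hsurj a
  exact ⟨b, hb⟩

lemma card_ker_dbl_of_even (ht : Even (Fintype.card B))
    (hsub : ({i : B | i ≠ 0 ∧ i + i = 0}.Subsingleton)) :
    Nat.card (dbl B).ker = 2 := by
  obtain ⟨i, hi0, hii⟩ := exists_involution ht
  have hmem : ∀ x : B, x ∈ (dbl B).ker ↔ x + x = 0 := by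
    intro x; simp [AddMonoidHom.mem_ker, dbl]
  have : ((dbl B).ker : Set B) = {0, i} := by
    ext x
    simp only [SetLike.mem_coe, hmem, Set.mem_insert_iff, Set.mem_singleton_iff]
    constructor
    · intro hx
      by_cases hx0 : x = 0
      · exact Or.inl hx0
      · exact Or.inr (hsub ⟨hx0, hx⟩ ⟨hi0, hii⟩)
    · rintro (rfl | rfl)
      · simp
      · exact hii
  have hcard : Nat.card (dbl B).ker = ({0, i} : Set B).ncard := by
    rw [← this]
    rfl
  rw [hcard, Set.ncard_pair (Ne.symm hi0)]

lemma card_Kf_of_even (ht : Even (Fintype.card B))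
    (hsub : ({i : B | i ≠ 0 ∧ i + i = 0}.Subsingleton)) :
    2 * (Kf B).card = Fintype.card B := by
  have h1 : Nat.card B = Nat.card (B ⧸ (dbl B).ker) * Nat.card (dbl B).ker :=
    AddSubgroup.card_eq_card_quotient_mul_card_addSubgroup (dbl B).ker
  have h2 : Nat.card (B ⧸ (dbl B).ker) = Nat.card (dbl B).range :=
    Nat.card_congr (QuotientAddGroup.quotientKerEquivRange (dbl B)).toEquiv
  have h3 : Nat.card (dbl B).range = (Kf B).card := by
    have hfin : (((dbl B).range : Set B)).Finite := Set.toFinite _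
    have hco : hfin.toFinset = Kf B := by
      ext a; simp [Kf, Set.Finite.mem_toFinset]
    rw [show Nat.card (dbl B).range = Nat.card ((dbl B).range : Set B) from rfl,
      Nat.card_coe_set_eq, Set.ncard_eq_toFinset_card _ hfin, hco]
  rw [card_ker_dbl_of_even ht hsub, h2, h3, Nat.card_eq_fintype_card] at h1
  omega

lemma involution_mem_Kf_of_four_dvd (h4 : 4 ∣ Fintype.card B)
    (hsub : ({i : B | i ≠ 0 ∧ i + i = 0}.Subsingleton))
    {i : B} (hi0 : i ≠ 0) (hii : i + i = 0) : i ∈ Kf B := by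
  have ht : Even (Fintype.card B) := by
    obtain ⟨k, hk⟩ := h4; exact ⟨2 * k, by omega⟩
  have hcard : 2 * (Kf B).card = Fintype.card B := card_Kf_of_even ht hsub
  have hKeven : Even (Fintype.card (dbl B).range) := by
    have : Fintype.card (dbl B).range = (Kf B).card := by
      rw [← Nat.card_eq_fintype_card]
      have hfin : (((dbl B).range : Set B)).Finite := Set.toFinite _
      have hco : hfin.toFinset = Kf B := by
        ext a; simp [Kf, Set.Finite.mem_toFinset]
      rw [show Nat.card (dbl B).range = Nat.card ((dbl B).range : Set B) from rfl,
        Nat.card_coe_set_eq, Set.ncard_eq_toFinset_card _ hfin, hco]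
    rw [this]
    obtain ⟨k, hk⟩ := h4
    refine ⟨k, by omega⟩
  have : Fact (Nat.Prime 2) := ⟨Nat.prime_two⟩
  obtain ⟨x, hx⟩ := exists_prime_addOrderOf_dvd_card (G := (dbl B).range) 2
    (even_iff_two_dvd.mp hKeven)
  have hx0 : (x : B) ≠ 0 := by
    intro h0
    have : x = 0 := Subtype.ext h0
    rw [this] at hx; simp at hx
  have hxx : (x : B) + (x : B) = 0 := by
    have := addOrderOf_nsmul_eq_zero x
    rw [hx, two_nsmul] at this
    have := congrArg (Subtype.val) this
    simpa using this
  have hxi : (x : B) = i := hsub ⟨hx0, hxx⟩ ⟨hi0, hii⟩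
  rw [mem_Kf]
  obtain ⟨b, hb⟩ := x.2
  refine ⟨b, ?_⟩
  rw [← hxi, ← hb]
  rfl

lemma involution_notMem_Kf_of_two_mod_four
    (ht2 : Fintype.card B % 4 = 2)
    (hsub : ({i : B | i ≠ 0 ∧ i + i = 0}.Subsingleton))
    {i : B} (hi0 : i ≠ 0) (hii : i + i = 0) : i ∉ Kf B := by
  intro hiK
  have ht : Even (Fintype.card B) := by
    refine Nat.even_iff.mpr ?_
    omega
  have hcard : 2 * (Kf B).card = Fintype.card B := card_Kf_of_even ht hsub
  -- |K| is odd
  have hKodd : ¬ Even (Fintype.card (dbl B).range) := by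
    have heq : Fintype.card (dbl B).range = (Kf B).card := by
      rw [← Nat.card_eq_fintype_card]
      have hfin : (((dbl B).range : Set B)).Finite := Set.toFinite _
      have hco : hfin.toFinset = Kf B := by
        ext a; simp [Kf, Set.Finite.mem_toFinset]
      rw [show Nat.card (dbl B).range = Nat.card ((dbl B).range : Set B) from rfl,
        Nat.card_coe_set_eq, Set.ncard_eq_toFinset_card _ hfin, hco]
    rw [heq, Nat.even_iff]
    omega
  -- but i ∈ K is an involution in K, so 2 ∣ |K|
  have hmem : i ∈ (dbl B).range := by
    rw [mem_Kf] at hiK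
    obtain ⟨b, hb⟩ := hiK
    exact ⟨b, by simpa [dbl] using hb⟩
  set xi : (dbl B).range := ⟨i, hmem⟩ with hxi
  have hxine : xi ≠ 0 := by
    intro h; apply hi0; exact congrArg Subtype.val h
  have hord : addOrderOf xi = 2 := by
    have hdvd : addOrderOf xi ∣ 2 := by
      apply addOrderOf_dvd_of_nsmul_eq_zero
      rw [two_nsmul]
      apply Subtype.ext
      simpa using hii
    rcases (Nat.dvd_prime Nat.prime_two).mp hdvd with h | h
    · exfalso
      have := addOrderOf_nsmul_eq_zero xi
      rw [h, one_nsmul] at this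
      exact hxine this
    · exact h
  have : (2 : ℕ) ∣ Fintype.card (dbl B).range := hord ▸ addOrderOf_dvd_card
  exact hKodd (even_iff_two_dvd.mpr this)

end GroupLemmas

/-! ### Negation-closed finsets -/

section NC

variable {B : Type} [AddCommGroup B] [DecidableEq B]

def NC (S : Finset B) : Prop := ∀ a ∈ S, -a ∈ S

lemma NC.empty : NC (∅ : Finset B) := fun a ha => absurd ha (Finset.notMem_empty a)

lemma nc_sum_eq_zero {S : Finset B} (h : NC S) (hfree : ∀ a ∈ S, a ≠ -a) :
    ∑ a ∈ S, a = 0 := by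
  exact Finset.sum_involution (fun a _ => -a) (fun a _ => by simp)
    (fun a ha _ => fun he => (hfree a ha) he.symm)
    (fun a ha => h a ha) (fun a ha => neg_neg a)

lemma exists_nc_subset : ∀ (k : ℕ) (S : Finset B), Even k → k ≤ S.card → NC S →
    (∀ a ∈ S, a ≠ -a) → ∃ T, T ⊆ S ∧ NC T ∧ T.card = k := by
  intro k
  induction k using Nat.strong_induction_on with
  | _ k ih =>
    intro S hk hkS hS hfree
    rcases Nat.eq_zero_or_pos k with h0 | hpos
    · exact ⟨∅, by simp, NC.empty, by simp [h0]⟩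
    · have hk2 : 2 ≤ k := by rcases hk with ⟨m, hm⟩; omega
      have hpos' : 0 < S.card := by omega
      obtain ⟨a, ha⟩ := Finset.card_pos.mp hpos'
      have hna : -a ∈ S := hS a ha
      have hane : a ≠ -a := hfree a ha
      set S' := (S.erase a).erase (-a) with hS'
      have hcardS' : S'.card = S.card - 2 := by
        rw [hS', Finset.card_erase_of_mem, Finset.card_erase_of_mem ha]
        · omega
        · exact Finset.mem_erase.mpr ⟨Ne.symm hane, hna⟩
      have hS'sub : S' ⊆ S := fun x hx =>
        Finset.mem_of_mem_erase (Finset.mem_of_mem_erase hx)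
      have hS'nc : NC S' := by
        intro b hb
        rw [hS', Finset.mem_erase, Finset.mem_erase] at hb ⊢
        refine ⟨?_, ?_, hS b hb.2.2⟩
        · exact fun hba => hb.2.1 (neg_inj.mp hba)
        · exact fun hba => hb.1 (by rw [← neg_neg b, hba])
      obtain ⟨T, hTsub, hTnc, hTcard⟩ := ih (k - 2) (by omega) S' (by
          rcases hk with ⟨m, hm⟩; exact ⟨m - 1, by omega⟩)
        (by omega) hS'nc (fun x hx => hfree x (hS'sub hx))
      refine ⟨insert a (insert (-a) T), ?_, ?_, ?_⟩
      · intro x hx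
        rcases Finset.mem_insert.mp hx with rfl | hx
        · exact ha
        · rcases Finset.mem_insert.mp hx with rfl | hx
          · exact hna
          · exact hS'sub (hTsub hx)
      · intro x hx
        rcases Finset.mem_insert.mp hx with rfl | hx
        · exact Finset.mem_insert_of_mem (Finset.mem_insert_self _ _)
        · rcases Finset.mem_insert.mp hx with rfl | hx
          · simp
          · exact Finset.mem_insert_of_mem (Finset.mem_insert_of_mem (hTnc x hx))
      · have haT : a ∉ insert (-a) T := by
          rw [Finset.mem_insert]
          rintro (h | h)
          · exact hane h
          · have := hTsub h
            rw [hS', Finset.mem_erase, Finset.mem_erase] at this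
            exact this.2.1 rfl
        have hnaT : -a ∉ T := by
          intro h
          have := hTsub h
          rw [hS', Finset.mem_erase] at this
          exact this.1 rfl
        rw [Finset.card_insert_of_notMem haT, Finset.card_insert_of_notMem hnaT, hTcard]
        omega

lemma alloc {ι : Type} [DecidableEq ι] (d : ι → ℕ) :
    ∀ (s : Finset ι) (S : Finset B), (∀ i ∈ s, Even (d i)) → (∑ i ∈ s, d i) ≤ S.card →
    NC S → (∀ a ∈ S, a ≠ -a) →
    ∃ T : ι → Finset B, (∀ i ∈ s, T i ⊆ S ∧ NC (T i) ∧ (T i).card = d i) ∧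
      (∀ i ∈ s, ∀ j ∈ s, i ≠ j → Disjoint (T i) (T j)) := by
  intro s
  induction s using Finset.induction_on with
  | empty =>
    intro S _ _ _ _
    exact ⟨fun _ => ∅, fun i hi => absurd hi (Finset.notMem_empty i), fun i hi => absurd hi (Finset.notMem_empty i)⟩
  | @insert i s his ih =>
    intro S heven hsum hnc hfree
    rw [Finset.sum_insert his] at hsum
    obtain ⟨Ti, hTisub, hTinc, hTicard⟩ := exists_nc_subset (d i) S
      (heven i (Finset.mem_insert_self i s)) (by omega) hnc hfree
    set S' := S \ Ti with hS'def
    have hcardS' : S'.card = S.card - d i := by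
      rw [hS'def, Finset.card_sdiff_of_subset hTisub, hTicard]
    obtain ⟨T, hT1, hT2⟩ := ih S' (fun j hj => heven j (Finset.mem_insert_of_mem hj))
      (by omega)
      (by
        intro b hb
        rw [hS'def, Finset.mem_sdiff] at hb ⊢
        refine ⟨hnc b hb.1, fun hmem => hb.2 ?_⟩
        have := hTinc _ hmem
        rwa [neg_neg] at this)
      (fun x hx => hfree x (Finset.mem_sdiff.mp hx).1)
    refine ⟨fun j => if j = i then Ti else T j, ?_, ?_⟩
    · intro j hj
      rcases Finset.mem_insert.mp hj with rfl | hj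
      · simp only [if_pos rfl]; exact ⟨hTisub, hTinc, hTicard⟩
      · have hji : j ≠ i := fun h => his (h ▸ hj)
        simp only [if_neg hji]
        obtain ⟨h1, h2, h3⟩ := hT1 j hj
        exact ⟨fun x hx => (Finset.mem_sdiff.mp (h1 hx)).1, h2, h3⟩
    · intro j hj k hk hjk
      rcases Finset.mem_insert.mp hj with hji | hjs
      · rcases Finset.mem_insert.mp hk with hki | hks
        · exact absurd (hji.trans hki.symm) hjk
        · have hki : k ≠ i := fun h => his (h ▸ hks)
          simp only [if_pos hji, if_neg hki]
          refine Finset.disjoint_left.mpr (fun x hx hx' => ?_)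
          exact (Finset.mem_sdiff.mp ((hT1 k hks).1 hx')).2 hx
      · rcases Finset.mem_insert.mp hk with hki | hks
        · have hji : j ≠ i := fun h => his (h ▸ hjs)
          simp only [if_pos hki, if_neg hji]
          refine Finset.disjoint_left.mpr (fun x hx hx' => ?_)
          exact (Finset.mem_sdiff.mp ((hT1 j hjs).1 hx)).2 hx'
        · have hji : j ≠ i := fun h => his (h ▸ hjs)
          have hki : k ≠ i := fun h => his (h ▸ hks)
          simp only [if_neg hji, if_neg hki]
          exact hT2 j hjs k hks hjk

end NC

/-! ### Assembling value sets from extras and a free pool -/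

section Assemble

variable {B : Type} [AddCommGroup B] [Fintype B] [DecidableEq B]
variable {ι : Type} [DecidableEq ι]

/-- Specification of a good family of value sets. -/
def GoodFamily (s : Finset ι) (bip : ι → Prop) (x y m : ι → ℕ)
    (FX FY : ι → Finset B) : Prop :=
  (∀ i ∈ s, bip i → (FX i).card = x i ∧ (FY i).card = y i ∧
      ∑ a ∈ FX i, a = ∑ a ∈ FY i, a) ∧
  (∀ i ∈ s, ¬ bip i → (FX i).card = m i ∧ (∃ a : B, ∑ b ∈ FX i, b = a + a)) ∧
  (∀ i ∈ s, Disjoint (FX i) (FY i)) ∧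
  (∀ i ∈ s, ∀ j ∈ s, i ≠ j → Disjoint (FX i ∪ FY i) (FX j ∪ FY j))

lemma assemble (s : Finset ι) (bip : ι → Prop) [DecidablePred bip] (x y m : ι → ℕ)
    (EX EY : ι → Finset B) (U : Finset B)
    (hUnc : NC U) (hUfree : ∀ a ∈ U, a ≠ -a)
    (hEdisjU : ∀ i ∈ s, Disjoint (EX i ∪ EY i) U)
    (hEdisj : ∀ i ∈ s, ∀ j ∈ s, i ≠ j → Disjoint (EX i ∪ EY i) (EX j ∪ EY j))
    (hEXY : ∀ i ∈ s, Disjoint (EX i) (EY i))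
    (hcardX : ∀ i ∈ s, (EX i).card ≤ (if bip i then x i else m i) ∧
      Even ((if bip i then x i else m i) - (EX i).card))
    (hcardY : ∀ i ∈ s, (EY i).card ≤ (if bip i then y i else 0) ∧
      Even ((if bip i then y i else 0) - (EY i).card))
    (hsumE : ∀ i ∈ s, bip i → ∑ a ∈ EX i, a = ∑ a ∈ EY i, a)
    (hsumE' : ∀ i ∈ s, ¬ bip i → ∃ a : B, ∑ b ∈ EX i, b = a + a)
    (hUcard : ∑ i ∈ s, (((if bip i then x i else m i) - (EX i).card)
        + ((if bip i then y i else 0) - (EY i).card)) ≤ U.card) :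
    ∃ FX FY : ι → Finset B, GoodFamily s bip x y m FX FY := by
  classical
  set d : ι × Bool → ℕ := fun p =>
    if p.2 then (if bip p.1 then y p.1 else 0) - (EY p.1).card
    else (if bip p.1 then x p.1 else m p.1) - (EX p.1).card with hd
  have hdX : ∀ i, d (i, false) = (if bip i then x i else m i) - (EX i).card := fun i => by
    simp [hd]
  have hdY : ∀ i, d (i, true) = (if bip i then y i else 0) - (EY i).card := fun i => by
    simp [hd]
  have hsum : ∑ p ∈ s ×ˢ (Finset.univ : Finset Bool), d p ≤ U.card := by
    rw [Finset.sum_product]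
    calc ∑ i ∈ s, ∑ b : Bool, d (i, b)
        = ∑ i ∈ s, (((if bip i then x i else m i) - (EX i).card)
          + ((if bip i then y i else 0) - (EY i).card)) := by
          apply Finset.sum_congr rfl
          intro i _
          rw [Fintype.sum_bool, hdX i, hdY i]
          omega
      _ ≤ U.card := hUcard
  obtain ⟨T, hT1, hT2⟩ := alloc d (s ×ˢ (Finset.univ : Finset Bool)) U
    (by
      rintro ⟨i, b⟩ hp
      rw [Finset.mem_product] at hp
      cases b
      · exact (hcardX i hp.1).2
      · exact (hcardY i hp.1).2)
    hsum hUnc hUfree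
  refine ⟨fun i => EX i ∪ T (i, false), fun i => EY i ∪ T (i, true), ?_, ?_, ?_, ?_⟩
  · intro i hi hbi
    have hpX : (i, false) ∈ s ×ˢ (Finset.univ : Finset Bool) := by
      rw [Finset.mem_product]; exact ⟨hi, Finset.mem_univ _⟩
    have hpY : (i, true) ∈ s ×ˢ (Finset.univ : Finset Bool) := by
      rw [Finset.mem_product]; exact ⟨hi, Finset.mem_univ _⟩
    obtain ⟨hTXsub, hTXnc, hTXcard⟩ := hT1 _ hpX
    obtain ⟨hTYsub, hTYnc, hTYcard⟩ := hT1 _ hpY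
    have hdisjX : Disjoint (EX i) (T (i, false)) :=
      Finset.disjoint_left.mpr (fun a ha ha' => Finset.disjoint_left.mp (hEdisjU i hi)
        (Finset.mem_union_left _ ha) (hTXsub ha'))
    have hdisjY : Disjoint (EY i) (T (i, true)) :=
      Finset.disjoint_left.mpr (fun a ha ha' => Finset.disjoint_left.mp (hEdisjU i hi)
        (Finset.mem_union_right _ ha) (hTYsub ha'))
    refine ⟨?_, ?_, ?_⟩
    · rw [Finset.card_union_of_disjoint hdisjX, hTXcard, hdX i]
      have := (hcardX i hi).1
      rw [if_pos hbi] at this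
      rw [if_pos hbi]
      omega
    · rw [Finset.card_union_of_disjoint hdisjY, hTYcard, hdY i]
      have := (hcardY i hi).1
      rw [if_pos hbi] at this
      rw [if_pos hbi]
      omega
    · rw [Finset.sum_union hdisjX, Finset.sum_union hdisjY,
        nc_sum_eq_zero hTXnc (fun a ha => hUfree a (hTXsub ha)),
        nc_sum_eq_zero hTYnc (fun a ha => hUfree a (hTYsub ha)),
        add_zero, add_zero]
      exact hsumE i hi hbi
  · intro i hi hbi
    have hpX : (i, false) ∈ s ×ˢ (Finset.univ : Finset Bool) := by
      rw [Finset.mem_product]; exact ⟨hi, Finset.mem_univ _⟩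
    obtain ⟨hTXsub, hTXnc, hTXcard⟩ := hT1 _ hpX
    have hdisjX : Disjoint (EX i) (T (i, false)) :=
      Finset.disjoint_left.mpr (fun a ha ha' => Finset.disjoint_left.mp (hEdisjU i hi)
        (Finset.mem_union_left _ ha) (hTXsub ha'))
    constructor
    · rw [Finset.card_union_of_disjoint hdisjX, hTXcard, hdX i]
      have := (hcardX i hi).1
      rw [if_neg hbi] at this
      rw [if_neg hbi]
      omega
    · obtain ⟨a, ha⟩ := hsumE' i hi hbi
      refine ⟨a, ?_⟩
      rw [Finset.sum_union hdisjX,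
        nc_sum_eq_zero hTXnc (fun a ha => hUfree a (hTXsub ha)), add_zero]
      exact ha
  · intro i hi
    have hpX : (i, false) ∈ s ×ˢ (Finset.univ : Finset Bool) := by
      rw [Finset.mem_product]; exact ⟨hi, Finset.mem_univ _⟩
    have hpY : (i, true) ∈ s ×ˢ (Finset.univ : Finset Bool) := by
      rw [Finset.mem_product]; exact ⟨hi, Finset.mem_univ _⟩
    obtain ⟨hTXsub, -, -⟩ := hT1 _ hpX
    obtain ⟨hTYsub, -, -⟩ := hT1 _ hpY
    have h1 := hEXY i hi
    have h2 := hT2 _ hpX _ hpY (by simp)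
    rw [Finset.disjoint_left]
    intro a ha ha'
    rcases Finset.mem_union.mp ha with ha | ha <;> rcases Finset.mem_union.mp ha' with ha' | ha'
    · exact Finset.disjoint_left.mp h1 ha ha'
    · exact Finset.disjoint_left.mp (hEdisjU i hi) (Finset.mem_union_left _ ha) (hTYsub ha')
    · exact Finset.disjoint_left.mp (hEdisjU i hi) (Finset.mem_union_right _ ha') (hTXsub ha)
    · exact Finset.disjoint_left.mp h2 ha ha'
  · intro i hi j hj hij
    have hpXi : (i, false) ∈ s ×ˢ (Finset.univ : Finset Bool) := by
      rw [Finset.mem_product]; exact ⟨hi, Finset.mem_univ _⟩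
    have hpYi : (i, true) ∈ s ×ˢ (Finset.univ : Finset Bool) := by
      rw [Finset.mem_product]; exact ⟨hi, Finset.mem_univ _⟩
    have hpXj : (j, false) ∈ s ×ˢ (Finset.univ : Finset Bool) := by
      rw [Finset.mem_product]; exact ⟨hj, Finset.mem_univ _⟩
    have hpYj : (j, true) ∈ s ×ˢ (Finset.univ : Finset Bool) := by
      rw [Finset.mem_product]; exact ⟨hj, Finset.mem_univ _⟩
    rw [Finset.disjoint_left]
    intro a ha ha'
    have hmemE : ∀ {k : ι} {hk : k ∈ s} {b},
        b ∈ EX k ∪ T (k, false) ∪ (EY k ∪ T (k, true)) →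
        b ∈ EX k ∪ EY k ∨ (b ∈ T (k, false) ∨ b ∈ T (k, true)) := by
      intro k hk b hb
      rcases Finset.mem_union.mp hb with hb | hb
      · rcases Finset.mem_union.mp hb with hb | hb
        · exact Or.inl (Finset.mem_union_left _ hb)
        · exact Or.inr (Or.inl hb)
      · rcases Finset.mem_union.mp hb with hb | hb
        · exact Or.inl (Finset.mem_union_right _ hb)
        · exact Or.inr (Or.inr hb)
    rcases hmemE (hk := hi) ha with hA | hA <;> rcases hmemE (hk := hj) ha' with hB | hB
    · exact Finset.disjoint_left.mp (hEdisj i hi j hj hij) hA hB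
    · rcases hB with hB | hB
      · exact Finset.disjoint_left.mp (hEdisjU i hi) hA ((hT1 _ hpXj).1 hB)
      · exact Finset.disjoint_left.mp (hEdisjU i hi) hA ((hT1 _ hpYj).1 hB)
    · rcases hA with hA | hA
      · exact Finset.disjoint_left.mp (hEdisjU j hj) hB ((hT1 _ hpXi).1 hA)
      · exact Finset.disjoint_left.mp (hEdisjU j hj) hB ((hT1 _ hpYi).1 hA)
    · rcases hA with hA | hA <;> rcases hB with hB | hB
      · exact Finset.disjoint_left.mp (hT2 _ hpXi _ hpXj (by simp [hij])) hA hB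
      · exact Finset.disjoint_left.mp (hT2 _ hpXi _ hpYj (by simp [hij])) hA hB
      · exact Finset.disjoint_left.mp (hT2 _ hpYi _ hpXj (by simp [hij])) hA hB
      · exact Finset.disjoint_left.mp (hT2 _ hpYi _ hpYj (by simp [hij])) hA hB

end Assemble

section ValueSets

variable {B : Type} [AddCommGroup B] [Fintype B] [DecidableEq B]
variable {ι : Type} [DecidableEq ι]

lemma valuesets_of_L (s : Finset ι) (bip : ι → Prop) [DecidablePred bip]
    (x y m : ι → ℕ)
    (hxy : ∀ i ∈ s, bip i → Even (x i) ∧ Even (y i))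
    (hm1 : ∀ i ∈ s, ¬ bip i → 1 ≤ m i)
    (L U : Finset B)
    (hLcard : L.card = (s.filter (fun i => ¬ bip i ∧ ¬ Even (m i))).card)
    (hLsum : ∀ a ∈ L, ∃ b : B, b + b = a)
    (hUnc : NC U) (hUfree : ∀ a ∈ U, a ≠ -a)
    (hLU : Disjoint L U)
    (hUcard : ∑ i ∈ s, (if bip i then x i + y i else m i)
      ≤ U.card + (s.filter (fun i => ¬ bip i ∧ ¬ Even (m i))).card) :
    ∃ FX FY : ι → Finset B, GoodFamily s bip x y m FX FY := by
  classical
  set O := s.filter (fun i => ¬ bip i ∧ ¬ Even (m i)) with hO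
  have hOmem : ∀ i, i ∈ O ↔ i ∈ s ∧ ¬ bip i ∧ ¬ Even (m i) := by
    intro i; rw [hO, Finset.mem_filter]
  have e : {i // i ∈ O} ≃ {a // a ∈ L} := Finset.equivOfCardEq hLcard.symm
  set EX : ι → Finset B := fun i => if h : i ∈ O then {(e ⟨i, h⟩ : B)} else ∅ with hEX
  have hEXO : ∀ i (h : i ∈ O), EX i = {(e ⟨i, h⟩ : B)} := by
    intro i h; rw [hEX]; simp [h]
  have hEXnO : ∀ i, i ∉ O → EX i = ∅ := by
    intro i h; rw [hEX]; simp [h]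
  have hEXL : ∀ i a, a ∈ EX i → a ∈ L := by
    intro i a ha
    by_cases h : i ∈ O
    · rw [hEXO i h, Finset.mem_singleton] at ha
      rw [ha]; exact (e ⟨i, h⟩).2
    · rw [hEXnO i h] at ha; exact absurd ha (Finset.notMem_empty a)
  apply assemble s bip x y m EX (fun _ => ∅) U hUnc hUfree
  · intro i hi
    rw [Finset.union_empty, Finset.disjoint_left]
    intro a ha
    exact fun haU => Finset.disjoint_left.mp hLU (hEXL i a ha) haU
  · intro i hi j hj hij
    rw [Finset.union_empty, Finset.union_empty, Finset.disjoint_left]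
    intro a ha haj
    by_cases hiO : i ∈ O
    · by_cases hjO : j ∈ O
      · rw [hEXO i hiO, Finset.mem_singleton] at ha
        rw [hEXO j hjO, Finset.mem_singleton] at haj
        have : e ⟨i, hiO⟩ = e ⟨j, hjO⟩ := Subtype.ext (by rw [← ha, ← haj])
        have := e.injective this
        exact hij (congrArg Subtype.val this)
      · rw [hEXnO j hjO] at haj; exact Finset.notMem_empty a haj
    · rw [hEXnO i hiO] at ha; exact Finset.notMem_empty a ha
  · intro i _; exact Finset.disjoint_empty_right _
  · intro i hi
    by_cases hb : bip i
    · have hiO : i ∉ O := fun h => ((hOmem i).mp h).2.1 hb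
      rw [hEXnO i hiO, if_pos hb, Finset.card_empty]
      exact ⟨Nat.zero_le _, by rw [Nat.sub_zero]; exact (hxy i hi hb).1⟩
    · rw [if_neg hb]
      by_cases hiO : i ∈ O
      · rw [hEXO i hiO, Finset.card_singleton]
        have hmodd : ¬ Even (m i) := ((hOmem i).mp hiO).2.2
        have hm : 1 ≤ m i := hm1 i hi hb
        refine ⟨hm, ?_⟩
        rw [Nat.even_iff] at hmodd ⊢
        omega
      · rw [hEXnO i hiO, Finset.card_empty]
        have hmeven : Even (m i) := by
          by_contra hc
          exact hiO ((hOmem i).mpr ⟨hi, hb, hc⟩)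
        exact ⟨Nat.zero_le _, by rw [Nat.sub_zero]; exact hmeven⟩
  · intro i hi
    by_cases hb : bip i
    · rw [if_pos hb, Finset.card_empty]
      exact ⟨Nat.zero_le _, by rw [Nat.sub_zero]; exact (hxy i hi hb).2⟩
    · rw [if_neg hb, Finset.card_empty]
      exact ⟨Nat.zero_le _, by simp⟩
  · intro i hi hb
    have hiO : i ∉ O := fun h => ((hOmem i).mp h).2.1 hb
    rw [hEXnO i hiO]
  · intro i hi hb
    by_cases hiO : i ∈ O
    · rw [hEXO i hiO, Finset.sum_singleton]
      obtain ⟨b, hbb⟩ := hLsum _ (e ⟨i, hiO⟩).2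
      exact ⟨b, hbb.symm⟩
    · rw [hEXnO i hiO]
      exact ⟨0, by simp⟩
  · have hterm : ∀ i ∈ s,
        ((if bip i then x i else m i) - (EX i).card
          + ((if bip i then y i else 0) - (Finset.card (∅ : Finset B))))
        + (if i ∈ O then 1 else 0) = (if bip i then x i + y i else m i) := by
      intro i hi
      rw [Finset.card_empty]
      by_cases hb : bip i
      · have hiO : i ∉ O := fun h => ((hOmem i).mp h).2.1 hb
        rw [hEXnO i hiO, if_pos hb, if_pos hb, if_pos hb, if_neg hiO, Finset.card_empty]
        omega
      · rw [if_neg hb, if_neg hb, if_neg hb]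
        by_cases hiO : i ∈ O
        · rw [hEXO i hiO, if_pos hiO, Finset.card_singleton]
          have := hm1 i hi hb
          omega
        · rw [hEXnO i hiO, if_neg hiO, Finset.card_empty]
          omega
    have hsplit : ∑ i ∈ s, ((if bip i then x i else m i) - (EX i).card
          + ((if bip i then y i else 0) - (Finset.card (∅ : Finset B))))
        + ∑ i ∈ s, (if i ∈ O then 1 else 0)
        = ∑ i ∈ s, (if bip i then x i + y i else m i) := by
      rw [← Finset.sum_add_distrib]
      exact Finset.sum_congr rfl hterm
    have hcount : ∑ i ∈ s, (if i ∈ O then 1 else 0) = O.card := by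
      rw [Finset.sum_ite_mem]
      have : s ∩ O = O := Finset.inter_eq_right.mpr (Finset.filter_subset _ s)
      rw [this, Finset.card_eq_sum_ones]
    omega

end ValueSets

section MainValueSets

variable {B : Type} [AddCommGroup B] [Fintype B] [DecidableEq B]
variable {ι : Type} [DecidableEq ι]

lemma exists_valuesets (s : Finset ι) (bip : ι → Prop) [DecidablePred bip]
    (x y m : ι → ℕ) (n : ℕ)
    (hxy : ∀ i ∈ s, bip i → Even (x i) ∧ 0 < x i ∧ Even (y i) ∧ 0 < y i)
    (hm3 : ∀ i ∈ s, ¬ bip i → 3 ≤ m i)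
    (hn : ∑ i ∈ s, (if bip i then x i + y i else m i) = n)
    (hst : (if n % 4 = 2 then n + 1 else n) ≤ Fintype.card B)
    (hsub : ({j : B | j ≠ 0 ∧ j + j = 0}.Subsingleton)) :
    ∃ FX FY : ι → Finset B, GoodFamily s bip x y m FX FY := by
  classical
  set t := Fintype.card B with htdef
  set O := s.filter (fun i => ¬ bip i ∧ ¬ Even (m i)) with hO
  set r := O.card with hr
  have ht1 : 1 ≤ t := Fintype.card_pos
  have htn : n ≤ t := by
    by_cases h : n % 4 = 2
    · rw [if_pos h] at hst; omega
    · rw [if_neg h] at hst; omega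
  have hplus : n % 4 = 2 → n + 1 ≤ t := by
    intro h; rw [if_pos h] at hst; exact hst
  have h3O : ∀ i ∈ O, 3 ≤ (if bip i then x i + y i else m i) := by
    intro i hiO
    have h := Finset.mem_filter.mp hiO
    rw [if_neg h.2.1]
    exact hm3 i h.1 h.2.1
  have h3r : 3 * r ≤ n := by
    calc 3 * r = ∑ _i ∈ O, 3 := by rw [Finset.sum_const, smul_eq_mul, mul_comm]
      _ ≤ ∑ i ∈ O, (if bip i then x i + y i else m i) := Finset.sum_le_sum h3O
      _ ≤ ∑ i ∈ s, (if bip i then x i + y i else m i) := by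
          apply Finset.sum_le_sum_of_subset (Finset.filter_subset _ s)
      _ = n := hn
  have hmod : ∀ i ∈ s, (if bip i then x i + y i else m i) % 2 = (if i ∈ O then 1 else 0) := by
    intro i hi
    by_cases hb : bip i
    · rw [if_pos hb, if_neg (fun h => (Finset.mem_filter.mp h).2.1 hb)]
      obtain ⟨he1, -, he2, -⟩ := hxy i hi hb
      rw [Nat.even_iff] at he1 he2
      omega
    · rw [if_neg hb]
      by_cases hiO : i ∈ O
      · rw [if_pos hiO]
        have := (Finset.mem_filter.mp hiO).2.2
        rw [Nat.even_iff] at this; omega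
      · rw [if_neg hiO]
        have : Even (m i) := by
          by_contra hc; exact hiO (Finset.mem_filter.mpr ⟨hi, hb, hc⟩)
        rw [Nat.even_iff] at this; omega
  have hn2 : n % 2 = r % 2 := by
    have h1 : n % 2 = (∑ i ∈ s, (if bip i then x i + y i else m i)) % 2 := by rw [hn]
    rw [Finset.sum_nat_mod, Finset.sum_congr rfl hmod] at h1
    have hcount : ∑ i ∈ s, (if i ∈ O then 1 else 0) = r := by
      rw [Finset.sum_ite_mem, Finset.inter_eq_right.mpr (Finset.filter_subset _ s)]
      exact (Finset.card_eq_sum_ones _).symm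
    rw [hcount] at h1
    omega
  have hxy' : ∀ i ∈ s, bip i → Even (x i) ∧ Even (y i) :=
    fun i hi hb => ⟨(hxy i hi hb).1, (hxy i hi hb).2.2.1⟩
  have hm1 : ∀ i ∈ s, ¬ bip i → 1 ≤ m i := fun i hi hb => le_trans (by omega) (hm3 i hi hb)
  by_cases ht2 : t % 2 = 1
  · -- t odd
    have hodd : ¬ Even (Fintype.card B) := by rw [Nat.even_iff]; omega
    have hKuniv := Kf_eq_univ_of_odd hodd
    set Free : Finset B := Finset.univ.erase 0 with hFree
    have hFreecard : Free.card = t - 1 := by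
      rw [hFree, Finset.card_erase_of_mem (Finset.mem_univ 0), Finset.card_univ]
    have hFreemem : ∀ a : B, a ∈ Free ↔ a ≠ 0 := by
      intro a; rw [hFree, Finset.mem_erase]; simp
    have hFreenc : NC Free := by
      intro a ha
      rw [hFreemem] at ha ⊢
      simpa using ha
    have hFreefree : ∀ a ∈ Free, a ≠ -a := by
      intro a ha heq
      exact (hFreemem a).mp ha
        (no_involution_of_odd hodd a (eq_neg_iff_add_eq_zero.mp heq))
    set k := if r % 2 = 0 then r else r - 1 with hk
    have hkval : (r % 2 = 0 ∧ k = r) ∨ (r % 2 = 1 ∧ k = r - 1) := by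
      by_cases h : r % 2 = 0
      · exact Or.inl ⟨h, by rw [hk, if_pos h]⟩
      · exact Or.inr ⟨by omega, by rw [hk, if_neg h]⟩
    have hkeven : Even k := by rw [Nat.even_iff]; rcases hkval with ⟨h1, h2⟩ | ⟨h1, h2⟩ <;> omega
    have hkle : k ≤ Free.card := by rw [hFreecard]; rcases hkval with ⟨h1, h2⟩ | ⟨h1, h2⟩ <;> omega
    obtain ⟨M, hMsub, hMnc, hMcard⟩ := exists_nc_subset k Free hkeven hkle hFreenc hFreefree
    set L := if r % 2 = 0 then M else insert 0 M with hL
    have h0M : (0 : B) ∉ M := fun h => (hFreemem 0).mp (hMsub h) rfl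
    have hLcard : L.card = r := by
      rcases hkval with ⟨h1, h2⟩ | ⟨h1, h2⟩
      · rw [hL, if_pos h1, hMcard, h2]
      · rw [hL, if_neg (by omega : ¬ r % 2 = 0), Finset.card_insert_of_notMem h0M, hMcard, h2]
        omega
    have hLsum : ∀ a ∈ L, ∃ b : B, b + b = a := by
      intro a _
      exact mem_Kf.mp (by rw [hKuniv]; exact Finset.mem_univ a)
    set U := Free \ M with hU
    have hUnc : NC U := by
      intro a ha
      rw [hU, Finset.mem_sdiff] at ha ⊢
      exact ⟨hFreenc a ha.1, fun h => ha.2 (by have := hMnc _ h; rwa [neg_neg] at this)⟩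
    have hUfree : ∀ a ∈ U, a ≠ -a := fun a ha => hFreefree a (Finset.mem_sdiff.mp ha).1
    have hLU : Disjoint L U := by
      rw [Finset.disjoint_left]
      intro a haL haU
      rw [hU, Finset.mem_sdiff] at haU
      by_cases h : r % 2 = 0
      · rw [hL, if_pos h] at haL; exact haU.2 haL
      · rw [hL, if_neg h, Finset.mem_insert] at haL
        rcases haL with rfl | haL
        · exact (hFreemem 0).mp haU.1 rfl
        · exact haU.2 haL
    have hUcard : U.card = t - 1 - k := by
      rw [hU, Finset.card_sdiff_of_subset hMsub, hFreecard, hMcard]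
    refine valuesets_of_L s bip x y m hxy' hm1 L U hLcard hLsum hUnc hUfree hLU ?_
    rw [hn, hUcard]
    have hdr : (s.filter (fun i => ¬ bip i ∧ ¬ Even (m i))).card = r := rfl
    rw [hdr]
    rcases hkval with ⟨h1, h2⟩ | ⟨h1, h2⟩ <;> omega
  · -- t even
    have hteven : Even (Fintype.card B) := by
      rw [Nat.even_iff]
      have : Fintype.card B = t := rfl
      omega
    obtain ⟨ι0, hι0, hιι⟩ := exists_involution hteven
    have hnegι : -ι0 = ι0 := by
      rw [neg_eq_iff_add_eq_zero]
      exact hιι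
    have htor : ∀ a : B, a = -a ↔ (a = 0 ∨ a = ι0) := by
      intro a
      constructor
      · intro h
        by_cases h0 : a = 0
        · exact Or.inl h0
        · exact Or.inr (hsub ⟨h0, eq_neg_iff_add_eq_zero.mp h⟩ ⟨hι0, hιι⟩)
      · rintro (rfl | rfl)
        · simp
        · exact hnegι.symm
    set Free : Finset B := (Finset.univ.erase 0).erase ι0 with hFree
    have hFreemem : ∀ a : B, a ∈ Free ↔ (a ≠ ι0 ∧ a ≠ 0) := by
      intro a
      rw [hFree, Finset.mem_erase, Finset.mem_erase]
      simp
    have hFreecard : Free.card = t - 2 := by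
      rw [hFree, Finset.card_erase_of_mem
        (Finset.mem_erase.mpr ⟨hι0, Finset.mem_univ _⟩),
        Finset.card_erase_of_mem (Finset.mem_univ 0), Finset.card_univ]
      have : Fintype.card B = t := rfl
      omega
    have hFreefree : ∀ a ∈ Free, a ≠ -a := by
      intro a ha heq
      rcases (htor a).mp heq with h | h
      · exact ((hFreemem a).mp ha).2 h
      · exact ((hFreemem a).mp ha).1 h
    have hFreenc : NC Free := by
      intro a ha
      rw [hFreemem] at ha ⊢
      constructor
      · intro h; exact ha.1 (by rw [← neg_neg a, h, hnegι])
      · intro h; exact ha.2 (by rwa [neg_eq_zero] at h)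
    have hKcard : 2 * (Kf B).card = t := card_Kf_of_even hteven hsub
    set KFree := (Kf B) ∩ Free with hKF
    have hKFnc : NC KFree := by
      intro a ha
      rw [hKF, Finset.mem_inter] at ha ⊢
      exact ⟨Kf_negclosed ha.1, hFreenc a ha.2⟩
    have hKFfree : ∀ a ∈ KFree, a ≠ -a := fun a ha => hFreefree a (Finset.mem_inter.mp ha).2
    have hKFsubF : KFree ⊆ Free := fun a ha => (Finset.mem_inter.mp ha).2
    have hKFsubK : KFree ⊆ Kf B := fun a ha => (Finset.mem_inter.mp ha).1
    have hKFcard : (Kf B).card ≤ KFree.card + 2 := by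
      have h1 : ((Kf B) ∩ Free).card + ((Kf B) \ Free).card = (Kf B).card :=
        Finset.card_inter_add_card_sdiff _ _
      have h2 : (Kf B) \ Free ⊆ {0, ι0} := by
        intro a ha
        rw [Finset.mem_sdiff] at ha
        have h3 := ha.2
        rw [hFreemem] at h3
        push_neg at h3
        by_cases h4 : a = ι0
        · exact Finset.mem_insert.mpr (Or.inr (Finset.mem_singleton.mpr h4))
        · exact Finset.mem_insert.mpr (Or.inl (h3 h4))
      have h5 := Finset.card_le_card h2
      have h6 : ({0, ι0} : Finset B).card ≤ 2 := by
        apply le_trans (Finset.card_insert_le _ _)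
        simp
      rw [← hKF] at h1
      omega
    by_cases hgad : r = 0 ∧ t = n
    · -- exceptional gadget case
      obtain ⟨hr0, htneq⟩ := hgad
      have ht4 : t % 4 = 0 := by
        by_cases h : n % 4 = 2
        · have := hplus h; omega
        · omega
      have hι0K : ι0 ∈ Kf B := involution_mem_Kf_of_four_dvd
        (Nat.dvd_of_mod_eq_zero (by have : Fintype.card B = t := rfl; omega)) hsub hι0 hιι
      obtain ⟨σ, hσ⟩ := mem_Kf.mp hι0K
      have hσ0 : σ ≠ 0 := by
        intro h
        apply hι0
        rw [← hσ, h, add_zero]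
      have hσι : σ ≠ ι0 := by
        intro h
        apply hι0
        rw [h, hιι] at hσ
        exact hσ.symm
      have hσσ : σ ≠ -σ := by
        intro h
        have h2 : σ + σ = 0 := eq_neg_iff_add_eq_zero.mp h
        rw [hσ] at h2
        exact hι0 h2
      have hnσ0 : -σ ≠ 0 := fun h => hσ0 (neg_eq_zero.mp h)
      have hnσι : -σ ≠ ι0 := by
        intro h
        apply hσι
        rw [← neg_neg σ, h, hnegι]
      have h0ι : (0 : B) ≠ ι0 := fun h => hι0 h.symm
      have hsne : s.Nonempty := by
        rcases Finset.eq_empty_or_nonempty s with h | h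
        · exfalso
          rw [h, Finset.sum_empty] at hn
          omega
        · exact h
      obtain ⟨i0, hi0⟩ := hsne
      have hOall : ∀ i ∈ s, ¬ bip i → Even (m i) := by
        intro i hi hb
        by_contra hc
        have hiO : i ∈ O := Finset.mem_filter.mpr ⟨hi, hb, hc⟩
        have hOe : O = ∅ := Finset.card_eq_zero.mp hr0
        rw [hOe] at hiO
        exact Finset.notMem_empty i hiO
      have hσF : σ ∈ Free := (hFreemem σ).mpr ⟨hσι, hσ0⟩
      have hnσF : -σ ∈ Free := (hFreemem _).mpr ⟨hnσι, hnσ0⟩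
      set U := Free \ ({σ, -σ} : Finset B) with hU
      have hUmem : ∀ a : B, a ∈ U ↔ (a ≠ ι0 ∧ a ≠ 0 ∧ a ≠ σ ∧ a ≠ -σ) := by
        intro a
        rw [hU, Finset.mem_sdiff, hFreemem, Finset.mem_insert, Finset.mem_singleton]
        tauto
      have hpairsub : ({σ, -σ} : Finset B) ⊆ Free := by
        intro a ha
        rcases Finset.mem_insert.mp ha with h | h
        · rw [h]; exact hσF
        · rw [Finset.mem_singleton.mp h]; exact hnσF
      have hUcard : U.card = t - 4 := by
        rw [hU, Finset.card_sdiff_of_subset hpairsub, hFreecard,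
          Finset.card_insert_of_notMem (fun hh => hσσ (Finset.mem_singleton.mp hh)),
          Finset.card_singleton]
        omega
      have hUnc : NC U := by
        intro a ha
        rw [hUmem] at ha ⊢
        obtain ⟨h1, h2, h3, h4⟩ := ha
        refine ⟨?_, ?_, ?_, ?_⟩
        · intro h; exact h1 (by rw [← neg_neg a, h, hnegι])
        · intro h; exact h2 (neg_eq_zero.mp h)
        · intro h; exact h4 (neg_eq_iff_eq_neg.mp h)
        · intro h; exact h3 (neg_inj.mp h)
      have hUfree : ∀ a ∈ U, a ≠ -a := fun a ha => hFreefree a (Finset.mem_sdiff.mp ha).1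
      have hx2 : bip i0 → 2 ≤ x i0 ∧ 2 ≤ y i0 := by
        intro hb
        obtain ⟨he1, hp1, he2, hp2⟩ := hxy i0 hi0 hb
        rw [Nat.even_iff] at he1 he2
        omega
      by_cases hbi0 : bip i0
      · -- bipartite special component
        have hc1 : ({0, σ} : Finset B).card = 2 := by
          rw [Finset.card_insert_of_notMem (fun hh => hσ0 (Finset.mem_singleton.mp hh).symm),
            Finset.card_singleton]
        have hc2 : ({ι0, -σ} : Finset B).card = 2 := by
          rw [Finset.card_insert_of_notMem (fun hh => hnσι (Finset.mem_singleton.mp hh).symm),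
            Finset.card_singleton]
        refine assemble s bip x y m
          (fun i => if i = i0 then ({0, σ} : Finset B) else ∅)
          (fun i => if i = i0 then ({ι0, -σ} : Finset B) else ∅)
          U hUnc hUfree ?_ ?_ ?_ ?_ ?_ ?_ ?_ ?_
        · intro i hi
          by_cases h : i = i0
          · simp only [if_pos h]
            rw [Finset.disjoint_left]
            intro a ha haU
            rw [hUmem] at haU
            rcases Finset.mem_union.mp ha with h1 | h1
            · rcases Finset.mem_insert.mp h1 with h2 | h2
              · exact haU.2.1 h2
              · exact haU.2.2.1 (Finset.mem_singleton.mp h2)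
            · rcases Finset.mem_insert.mp h1 with h2 | h2
              · exact haU.1 h2
              · exact haU.2.2.2 (Finset.mem_singleton.mp h2)
          · simp only [if_neg h]
            simp
        · intro i hi j hj hij
          by_cases h : i = i0
          · have hjne : j ≠ i0 := fun hj' => hij (h.trans hj'.symm)
            simp only [if_pos h, if_neg hjne]
            simp
          · simp only [if_neg h]
            simp
        · intro i hi
          by_cases h : i = i0
          · simp only [if_pos h]
            rw [Finset.disjoint_left]
            intro a ha ha'
            rcases Finset.mem_insert.mp ha with h1 | h1
            · rcases Finset.mem_insert.mp ha' with h2 | h2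
              · exact h0ι (h1.symm.trans h2)
              · exact hnσ0 ((Finset.mem_singleton.mp h2).symm.trans h1)
            · rcases Finset.mem_insert.mp ha' with h2 | h2
              · exact hσι ((Finset.mem_singleton.mp h1).symm.trans h2)
              · exact hσσ ((Finset.mem_singleton.mp h1).symm.trans
                  (Finset.mem_singleton.mp h2))
          · simp only [if_neg h]
            simp
        · intro i hi
          by_cases h : i = i0
          · subst h
            simp only [eq_self_iff_true, if_true, if_pos hbi0, hc1]
            obtain ⟨hx2', hy2'⟩ := hx2 hbi0
            obtain ⟨he1, -, -, -⟩ := hxy i hi hbi0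
            rw [Nat.even_iff] at he1 ⊢
            omega
          · simp only [if_neg h, Finset.card_empty]
            by_cases hb : bip i
            · rw [if_pos hb]
              exact ⟨Nat.zero_le _, by rw [Nat.sub_zero]; exact (hxy' i hi hb).1⟩
            · rw [if_neg hb]
              exact ⟨Nat.zero_le _, by rw [Nat.sub_zero]; exact hOall i hi hb⟩
        · intro i hi
          by_cases h : i = i0
          · subst h
            simp only [eq_self_iff_true, if_true, if_pos hbi0, hc2]
            obtain ⟨hx2', hy2'⟩ := hx2 hbi0
            obtain ⟨-, -, he2, -⟩ := hxy i hi hbi0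
            rw [Nat.even_iff] at he2 ⊢
            omega
          · simp only [if_neg h, Finset.card_empty]
            by_cases hb : bip i
            · rw [if_pos hb]
              exact ⟨Nat.zero_le _, by rw [Nat.sub_zero]; exact (hxy' i hi hb).2⟩
            · rw [if_neg hb]
              exact ⟨Nat.zero_le _, by simp⟩
        · intro i hi hb
          by_cases h : i = i0
          · simp only [if_pos h]
            rw [Finset.sum_pair (Ne.symm hσ0), Finset.sum_pair (Ne.symm hnσι), zero_add, ← hσ]
            exact (add_neg_cancel_right σ σ).symm
          · simp only [if_neg h]
        · intro i hi hb
          have h : i ≠ i0 := fun hh => hb (by rw [hh]; exact hbi0)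
          simp only [if_neg h]
          exact ⟨0, by simp⟩
        · have hterm : ∀ i ∈ s.erase i0,
              ((if bip i then x i else m i)
                - (Finset.card (if i = i0 then ({0, σ} : Finset B) else ∅))
                + ((if bip i then y i else 0)
                - (Finset.card (if i = i0 then ({ι0, -σ} : Finset B) else ∅))))
              = (if bip i then x i + y i else m i) := by
            intro i hi
            have hne : i ≠ i0 := (Finset.mem_erase.mp hi).1
            simp only [if_neg hne, Finset.card_empty]
            by_cases hb : bip i
            · simp only [if_pos hb]; omega
            · simp only [if_neg hb]; omega
          rw [← Finset.add_sum_erase s _ hi0, Finset.sum_congr rfl hterm]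
          have htot := Finset.add_sum_erase s (fun i => if bip i then x i + y i else m i) hi0
          rw [hn] at htot
          simp only [eq_self_iff_true, if_true, if_pos hbi0, hc1, hc2]
          obtain ⟨hx2', hy2'⟩ := hx2 hbi0
          simp only [if_pos hbi0] at htot
          rw [hUcard]
          omega
      · -- non-bipartite special component
        have hmem4 : ∀ a : B, a ∈ ({0, ι0, σ, -σ} : Finset B) ↔
            (a = 0 ∨ a = ι0 ∨ a = σ ∨ a = -σ) := by
          intro a
          simp [Finset.mem_insert, Finset.mem_singleton]
        have hc4 : ({0, ι0, σ, -σ} : Finset B).card = 4 := by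
          rw [Finset.card_insert_of_notMem (by
              rw [Finset.mem_insert, Finset.mem_insert, Finset.mem_singleton]
              rintro (h | h | h)
              · exact h0ι h
              · exact hσ0 h.symm
              · exact hnσ0 h.symm),
            Finset.card_insert_of_notMem (by
              rw [Finset.mem_insert, Finset.mem_singleton]
              rintro (h | h)
              · exact hσι h.symm
              · exact hnσι h.symm),
            Finset.card_insert_of_notMem (fun hh => hσσ (Finset.mem_singleton.mp hh)),
            Finset.card_singleton]
        have hsum4 : ∑ a ∈ ({0, ι0, σ, -σ} : Finset B), a = ι0 := by
          rw [Finset.sum_insert (by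
              rw [Finset.mem_insert, Finset.mem_insert, Finset.mem_singleton]
              rintro (h | h | h)
              · exact h0ι h
              · exact hσ0 h.symm
              · exact hnσ0 h.symm),
            Finset.sum_insert (by
              rw [Finset.mem_insert, Finset.mem_singleton]
              rintro (h | h)
              · exact hσι h.symm
              · exact hnσι h.symm),
            Finset.sum_pair hσσ]
          rw [add_neg_cancel, add_zero, zero_add]
        have hm4 : 4 ≤ m i0 := by
          have h3 := hm3 i0 hi0 hbi0
          have he := hOall i0 hi0 hbi0
          rw [Nat.even_iff] at he
          omega
        refine assemble s bip x y m
          (fun i => if i = i0 then ({0, ι0, σ, -σ} : Finset B) else ∅)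
          (fun _ => ∅)
          U hUnc hUfree ?_ ?_ ?_ ?_ ?_ ?_ ?_ ?_
        · intro i hi
          rw [Finset.union_empty]
          by_cases h : i = i0
          · simp only [if_pos h]
            rw [Finset.disjoint_left]
            intro a ha haU
            rw [hUmem] at haU
            rcases (hmem4 a).mp ha with h1 | h1 | h1 | h1
            · exact haU.2.1 h1
            · exact haU.1 h1
            · exact haU.2.2.1 h1
            · exact haU.2.2.2 h1
          · simp only [if_neg h]
            simp
        · intro i hi j hj hij
          rw [Finset.union_empty, Finset.union_empty]
          by_cases h : i = i0
          · have hjne : j ≠ i0 := fun hj' => hij (h.trans hj'.symm)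
            simp only [if_pos h, if_neg hjne]
            simp
          · simp only [if_neg h]
            simp
        · intro i hi
          exact Finset.disjoint_empty_right _
        · intro i hi
          by_cases h : i = i0
          · subst h
            simp only [eq_self_iff_true, if_true, if_neg hbi0, hc4]
            have he := hOall i hi hbi0
            rw [Nat.even_iff] at he ⊢
            omega
          · simp only [if_neg h, Finset.card_empty]
            by_cases hb : bip i
            · rw [if_pos hb]
              exact ⟨Nat.zero_le _, by rw [Nat.sub_zero]; exact (hxy' i hi hb).1⟩
            · rw [if_neg hb]
              exact ⟨Nat.zero_le _, by rw [Nat.sub_zero]; exact hOall i hi hb⟩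
        · intro i hi
          rw [Finset.card_empty]
          by_cases hb : bip i
          · rw [if_pos hb]
            exact ⟨Nat.zero_le _, by rw [Nat.sub_zero]; exact (hxy' i hi hb).2⟩
          · rw [if_neg hb]
            exact ⟨Nat.zero_le _, by simp⟩
        · intro i hi hb
          have h : i ≠ i0 := fun hh => hbi0 (by rw [← hh]; exact hb)
          simp only [if_neg h]
        · intro i hi hb
          by_cases h : i = i0
          · simp only [if_pos h]
            exact ⟨σ, by rw [hsum4, hσ]⟩
          · simp only [if_neg h]
            exact ⟨0, by simp⟩
        · have hterm : ∀ i ∈ s.erase i0,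
              ((if bip i then x i else m i)
                - (Finset.card (if i = i0 then ({0, ι0, σ, -σ} : Finset B) else ∅))
                + ((if bip i then y i else 0) - (Finset.card (∅ : Finset B))))
              = (if bip i then x i + y i else m i) := by
            intro i hi
            have hne : i ≠ i0 := (Finset.mem_erase.mp hi).1
            simp only [if_neg hne, Finset.card_empty]
            by_cases hb : bip i
            · simp only [if_pos hb]; omega
            · simp only [if_neg hb]; omega
          rw [← Finset.add_sum_erase s _ hi0, Finset.sum_congr rfl hterm]
          have htot := Finset.add_sum_erase s (fun i => if bip i then x i + y i else m i) hi0
          rw [hn] at htot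
          simp only [eq_self_iff_true, if_true, if_neg hbi0, hc4, Finset.card_empty]
          simp only [if_neg hbi0] at htot
          rw [hUcard]
          omega
    · by_cases hr0 : r = 0
      · -- r = 0, t ≠ n
        refine valuesets_of_L s bip x y m hxy' hm1 ∅ Free ?_ (by simp) hFreenc hFreefree
          (Finset.disjoint_empty_left _) ?_
        · rw [Finset.card_empty]
          exact hr0.symm
        · rw [hn, hFreecard]
          have hdr : (s.filter (fun i => ¬ bip i ∧ ¬ Even (m i))).card = r := rfl
          rw [hdr]
          have htne : t ≠ n := fun h => hgad ⟨hr0, h⟩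
          omega
      · -- r ≥ 1
        by_cases hrodd : r % 2 = 1
        · -- r odd : L = {0} ∪ M with M ⊆ KFree of size r - 1
          have hbound : r - 1 ≤ KFree.card := by omega
          obtain ⟨M, hMsub, hMnc, hMcard⟩ := exists_nc_subset (r - 1) KFree
            (by rw [Nat.even_iff]; omega) hbound hKFnc hKFfree
          have h0M : (0 : B) ∉ M := fun h => ((hFreemem 0).mp (hKFsubF (hMsub h))).2 rfl
          set L := insert (0 : B) M with hL
          have hLcard : L.card = r := by
            rw [hL, Finset.card_insert_of_notMem h0M, hMcard]; omega
          have hLsum : ∀ a ∈ L, ∃ b : B, b + b = a := by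
            intro a ha
            rcases Finset.mem_insert.mp ha with rfl | ha
            · exact ⟨0, by simp⟩
            · exact mem_Kf.mp (hKFsubK (hMsub ha))
          set U := Free \ M with hU
          have hUnc : NC U := by
            intro a ha
            rw [hU, Finset.mem_sdiff] at ha ⊢
            exact ⟨hFreenc a ha.1, fun h => ha.2 (by have := hMnc _ h; rwa [neg_neg] at this)⟩
          have hUfree : ∀ a ∈ U, a ≠ -a := fun a ha => hFreefree a (Finset.mem_sdiff.mp ha).1
          have hLU : Disjoint L U := by
            rw [Finset.disjoint_left]
            intro a haL haU
            rw [hU, Finset.mem_sdiff] at haU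
            rcases Finset.mem_insert.mp haL with rfl | haL
            · exact ((hFreemem 0).mp haU.1).2 rfl
            · exact haU.2 haL
          have hUcard : U.card = t - 2 - (r - 1) := by
            rw [hU, Finset.card_sdiff_of_subset (hMsub.trans hKFsubF), hFreecard, hMcard]
          refine valuesets_of_L s bip x y m hxy' hm1 L U hLcard hLsum hUnc hUfree hLU ?_
          rw [hn, hUcard]
          have hdr : (s.filter (fun i => ¬ bip i ∧ ¬ Even (m i))).card = r := rfl
          rw [hdr]
          omega
        · by_cases ht4 : t % 4 = 0
          · -- r even > 0, 4 ∣ t : L = {0, ι0} ∪ M with M of size r - 2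
            have hι0K : ι0 ∈ Kf B := involution_mem_Kf_of_four_dvd
              (Nat.dvd_of_mod_eq_zero (by
                have : Fintype.card B = t := rfl
                omega)) hsub hι0 hιι
            have hbound : r - 2 ≤ KFree.card := by omega
            obtain ⟨M, hMsub, hMnc, hMcard⟩ := exists_nc_subset (r - 2) KFree
              (by rw [Nat.even_iff]; omega) hbound hKFnc hKFfree
            have h0M : (0 : B) ∉ M := fun h => ((hFreemem 0).mp (hKFsubF (hMsub h))).2 rfl
            have hιM : ι0 ∉ M := fun h => ((hFreemem ι0).mp (hKFsubF (hMsub h))).1 rfl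
            set L := insert (0 : B) (insert ι0 M) with hL
            have hLcard : L.card = r := by
              rw [hL, Finset.card_insert_of_notMem (by
                  rw [Finset.mem_insert]
                  rintro (h | h)
                  · exact hι0 h.symm
                  · exact h0M h),
                Finset.card_insert_of_notMem hιM, hMcard]
              omega
            have hLsum : ∀ a ∈ L, ∃ b : B, b + b = a := by
              intro a ha
              rcases Finset.mem_insert.mp ha with rfl | ha
              · exact ⟨0, by simp⟩
              · rcases Finset.mem_insert.mp ha with rfl | ha
                · exact mem_Kf.mp hι0K
                · exact mem_Kf.mp (hKFsubK (hMsub ha))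
            set U := Free \ M with hU
            have hUnc : NC U := by
              intro a ha
              rw [hU, Finset.mem_sdiff] at ha ⊢
              exact ⟨hFreenc a ha.1, fun h => ha.2 (by have := hMnc _ h; rwa [neg_neg] at this)⟩
            have hUfree : ∀ a ∈ U, a ≠ -a := fun a ha => hFreefree a (Finset.mem_sdiff.mp ha).1
            have hLU : Disjoint L U := by
              rw [Finset.disjoint_left]
              intro a haL haU
              rw [hU, Finset.mem_sdiff] at haU
              rcases Finset.mem_insert.mp haL with ha0 | haL
              · exact ((hFreemem a).mp haU.1).2 ha0
              · rcases Finset.mem_insert.mp haL with haι | haL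
                · exact ((hFreemem a).mp haU.1).1 haι
                · exact haU.2 haL
            have hUcard : U.card = t - 2 - (r - 2) := by
              rw [hU, Finset.card_sdiff_of_subset (hMsub.trans hKFsubF), hFreecard, hMcard]
            refine valuesets_of_L s bip x y m hxy' hm1 L U hLcard hLsum hUnc hUfree hLU ?_
            rw [hn, hUcard]
            have hdr : (s.filter (fun i => ¬ bip i ∧ ¬ Even (m i))).card = r := rfl
            rw [hdr]
            omega
          · -- r even > 0, t ≡ 2 mod 4 : L = M of size r
            have hι0K : ι0 ∉ Kf B := involution_notMem_Kf_of_two_mod_four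
              (by have : Fintype.card B = t := rfl; omega) hsub hι0 hιι
            have hKFcard' : (Kf B).card ≤ KFree.card + 1 := by
              have h1 : ((Kf B) ∩ Free).card + ((Kf B) \ Free).card = (Kf B).card :=
                Finset.card_inter_add_card_sdiff _ _
              have h2 : (Kf B) \ Free ⊆ {0} := by
                intro a ha
                rw [Finset.mem_sdiff] at ha
                have h3 := ha.2
                rw [hFreemem] at h3
                push_neg at h3
                by_cases h4 : a = ι0
                · exact absurd (h4 ▸ ha.1) hι0K
                · exact Finset.mem_singleton.mpr (h3 h4)
              have h5 := Finset.card_le_card h2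
              rw [Finset.card_singleton] at h5
              rw [← hKF] at h1
              omega
            have hbound : r ≤ KFree.card := by omega
            obtain ⟨M, hMsub, hMnc, hMcard⟩ := exists_nc_subset r KFree
              (by rw [Nat.even_iff]; omega) hbound hKFnc hKFfree
            have hLsum : ∀ a ∈ M, ∃ b : B, b + b = a :=
              fun a ha => mem_Kf.mp (hKFsubK (hMsub ha))
            set U := Free \ M with hU
            have hUnc : NC U := by
              intro a ha
              rw [hU, Finset.mem_sdiff] at ha ⊢
              exact ⟨hFreenc a ha.1, fun h => ha.2 (by have := hMnc _ h; rwa [neg_neg] at this)⟩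
            have hUfree : ∀ a ∈ U, a ≠ -a := fun a ha => hFreefree a (Finset.mem_sdiff.mp ha).1
            have hLU : Disjoint M U := by
              rw [Finset.disjoint_left]
              intro a haL haU
              rw [hU, Finset.mem_sdiff] at haU
              exact haU.2 haL
            have hUcard : U.card = t - 2 - r := by
              rw [hU, Finset.card_sdiff_of_subset (hMsub.trans hKFsubF), hFreecard, hMcard]
            refine valuesets_of_L s bip x y m hxy' hm1 M U hMcard hLsum hUnc hUfree hLU ?_
            rw [hn, hUcard]
            have hdr : (s.filter (fun i => ¬ bip i ∧ ¬ Even (m i))).card = r := rfl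
            rw [hdr]
            have hn4 : n % 4 = 2 → n + 1 ≤ t := hplus
            by_cases h : n % 4 = 2
            · have := hplus h
              omega
            · omega

end MainValueSets


/-- Let `G` be a finite simple graph of order `n` with no component of order less
than 3 and all bipartite components having both color classes of even order. Let
`s = n + 1` if `n ≡ 2 (mod 4)` and `s = n` otherwise. Then for every integer `t ≥ s`
and every Abelian group of order `t` with at most one involution, there exists a
`𝒢`-irregular labeling of `G`. -/
theorem exists_irregular_labeling_of_at_most_one_involution
    {V : Type} [Fintype V] (G : SimpleGraph V) (n : ℕ) (hn : Fintype.card V = n)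
    (hcomp : ∀ c : G.ConnectedComponent, 3 ≤ c.supp.ncard)
    (hbip : ∀ (c : G.ConnectedComponent) (X Y : Set V),
      G.IsComponentBipartition c X Y → Even X.ncard ∧ Even Y.ncard)
    (s : ℕ) (hs : s = if n % 4 = 2 then n + 1 else n) :
    ∀ t : ℕ, s ≤ t →
      ∀ (A : Type) [AddCommGroup A] [Fintype A], Fintype.card A = t →
        ({ι : A | ι ≠ 0 ∧ ι + ι = 0}.Subsingleton) →
        ∃ f : Sym2 V → A, G.IsIrregular f := by
  classical
  intro t hts A instG instF hcardA hsubA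
  set bip : G.ConnectedComponent → Prop :=
    fun c => ∃ X Y : Set V, G.IsComponentBipartition c X Y with hbipdef
  set Xc : G.ConnectedComponent → Set V :=
    fun c => if h : bip c then h.choose else ∅ with hXcdef
  set Yc : G.ConnectedComponent → Set V :=
    fun c => if h : bip c then h.choose_spec.choose else ∅ with hYcdef
  have hXYc : ∀ c, bip c → G.IsComponentBipartition c (Xc c) (Yc c) := by
    intro c h
    rw [hXcdef, hYcdef]
    simp only [dif_pos h]
    exact h.choose_spec.choose_spec
  set XF : G.ConnectedComponent → Finset V := fun c => (Xc c).toFinite.toFinset with hXFdef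
  set YF : G.ConnectedComponent → Finset V := fun c => (Yc c).toFinite.toFinset with hYFdef
  set SF : G.ConnectedComponent → Finset V := fun c => c.supp.toFinite.toFinset with hSFdef
  have hXFmem : ∀ c v, v ∈ XF c ↔ v ∈ Xc c := fun c v => Set.Finite.mem_toFinset _
  have hYFmem : ∀ c v, v ∈ YF c ↔ v ∈ Yc c := fun c v => Set.Finite.mem_toFinset _
  have hSFmem : ∀ c v, v ∈ SF c ↔ v ∈ c.supp := fun c v => Set.Finite.mem_toFinset _
  set x : G.ConnectedComponent → ℕ := fun c => (XF c).card with hxdef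
  set y : G.ConnectedComponent → ℕ := fun c => (YF c).card with hydef
  set m : G.ConnectedComponent → ℕ := fun c => (SF c).card with hmdef
  have hm_ncard : ∀ c, m c = c.supp.ncard := by
    intro c
    rw [hmdef, hSFdef]
    exact (Set.ncard_eq_toFinset_card _ _).symm
  -- partition facts for bipartite components
  have hXYU : ∀ c, bip c → XF c ∪ YF c = SF c ∧ Disjoint (XF c) (YF c) := by
    intro c h
    obtain ⟨hU, hD, _⟩ := hXYc c h
    constructor
    · ext v
      rw [Finset.mem_union, hXFmem, hYFmem, hSFmem, ← Set.mem_union, hU]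
    · rw [Finset.disjoint_left]
      intro a ha ha'
      exact Set.disjoint_left.mp hD ((hXFmem c a).mp ha) ((hYFmem c a).mp ha')
  have hxym : ∀ c, bip c → x c + y c = m c := by
    intro c h
    obtain ⟨hU, hD⟩ := hXYU c h
    rw [hxdef, hydef, hmdef, ← Finset.card_union_of_disjoint hD, hU]
  -- class positivity
  have hpos : ∀ c, bip c → 0 < x c ∧ 0 < y c := by
    intro c h
    obtain ⟨a, b, ha, hb, hab⟩ := exists_adj_in_supp (G := G) (hcomp c)
    obtain ⟨h1, h2⟩ | ⟨h1, h2⟩ := (hXYc c h).2.2 a b ha hb hab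
    · exact ⟨Finset.card_pos.mpr ⟨a, (hXFmem c a).mpr h1⟩,
        Finset.card_pos.mpr ⟨b, (hYFmem c b).mpr h2⟩⟩
    · exact ⟨Finset.card_pos.mpr ⟨b, (hXFmem c b).mpr h2⟩,
        Finset.card_pos.mpr ⟨a, (hYFmem c a).mpr h1⟩⟩
  -- total count
  have hsum_m : ∑ c : G.ConnectedComponent, m c = n := by
    rw [← hn, ← Finset.card_univ]
    rw [Finset.card_eq_sum_card_fiberwise
      (f := fun v => G.connectedComponentMk v)
      (t := (Finset.univ : Finset G.ConnectedComponent))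
      (fun v _ => Finset.mem_univ _)]
    apply Finset.sum_congr rfl
    intro c _
    have hset : SF c = Finset.univ.filter (fun v => G.connectedComponentMk v = c) := by
      ext v
      rw [hSFmem, SimpleGraph.ConnectedComponent.mem_supp_iff, Finset.mem_filter]
      simp
    show (SF c).card = _
    rw [hset]
  have hn_eq : ∑ c ∈ (Finset.univ : Finset G.ConnectedComponent),
      (if bip c then x c + y c else m c) = n := by
    rw [← hsum_m]
    apply Finset.sum_congr rfl
    intro c _
    by_cases h : bip c
    · rw [if_pos h, hxym c h]
    · rw [if_neg h]
  -- get the value sets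
  obtain ⟨FX, FY, hgood⟩ := exists_valuesets (B := A)
    (Finset.univ : Finset G.ConnectedComponent) bip x y m n
    (by
      intro c _ h
      obtain ⟨he1, he2⟩ := hbip c (Xc c) (Yc c) (hXYc c h)
      obtain ⟨hp1, hp2⟩ := hpos c h
      refine ⟨?_, hp1, ?_, hp2⟩
      · rwa [Set.ncard_eq_toFinset_card _ _] at he1
      · rwa [Set.ncard_eq_toFinset_card _ _] at he2)
    (fun c _ _ => by rw [hm_ncard]; exact hcomp c)
    hn_eq
    (by rw [hcardA, ← hs]; exact hts)
    hsubA
  obtain ⟨hgx, hgm, hgd1, hgd2⟩ := hgood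
  -- equivalences between vertex blocks and value sets
  have hcardFX : ∀ c, bip c → (XF c).card = (FX c).card :=
    fun c h => ((hgx c (Finset.mem_univ c) h).1).symm
  have hcardFY : ∀ c, bip c → (YF c).card = (FY c).card :=
    fun c h => ((hgx c (Finset.mem_univ c) h).2.1).symm
  have hcardFS : ∀ c, ¬ bip c → (SF c).card = (FX c).card :=
    fun c h => ((hgm c (Finset.mem_univ c) h).1).symm
  let eX : ∀ c, bip c → ({v // v ∈ XF c} ≃ {a // a ∈ FX c}) :=
    fun c h => Finset.equivOfCardEq (hcardFX c h)
  let eY : ∀ c, bip c → ({v // v ∈ YF c} ≃ {a // a ∈ FY c}) :=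
    fun c h => Finset.equivOfCardEq (hcardFY c h)
  let eS : ∀ c, ¬ bip c → ({v // v ∈ SF c} ≃ {a // a ∈ FX c}) :=
    fun c h => Finset.equivOfCardEq (hcardFS c h)
  have hvS : ∀ v : V, v ∈ SF (G.connectedComponentMk v) := by
    intro v
    rw [hSFmem, SimpleGraph.ConnectedComponent.mem_supp_iff]
  have hvXY : ∀ v : V, bip (G.connectedComponentMk v) →
      v ∉ XF (G.connectedComponentMk v) → v ∈ YF (G.connectedComponentMk v) := by
    intro v hb hx
    have := (hXYU _ hb).1
    have hv := hvS v
    rw [← this, Finset.mem_union] at hv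
    tauto
  set w : V → A := fun v =>
    if hb : bip (G.connectedComponentMk v) then
      (if hx : v ∈ XF (G.connectedComponentMk v) then
        ((eX _ hb ⟨v, hx⟩ : {a // a ∈ FX (G.connectedComponentMk v)}) : A)
      else ((eY _ hb ⟨v, hvXY v hb hx⟩ : {a // a ∈ FY (G.connectedComponentMk v)}) : A))
    else ((eS _ hb ⟨v, hvS v⟩ : {a // a ∈ FX (G.connectedComponentMk v)}) : A)
    with hwdef
  -- evaluation lemmas (with component generalized)
  have hwX : ∀ (c) (v : V) (hc : G.connectedComponentMk v = c) (hb : bip c)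
      (hx : v ∈ XF c), w v = ((eX c hb ⟨v, hx⟩ : {a // a ∈ FX c}) : A) := by
    intro c v hc hb hx
    subst hc
    rw [hwdef]
    simp only [dif_pos hb, dif_pos hx]
  have hwY : ∀ (c) (v : V) (hc : G.connectedComponentMk v = c) (hb : bip c)
      (hx : v ∉ XF c) (hy : v ∈ YF c),
      w v = ((eY c hb ⟨v, hy⟩ : {a // a ∈ FY c}) : A) := by
    intro c v hc hb hx hy
    subst hc
    rw [hwdef]
    simp only [dif_pos hb, dif_neg hx]
  have hwS : ∀ (c) (v : V) (hc : G.connectedComponentMk v = c) (hb : ¬ bip c)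
      (hsv : v ∈ SF c),
      w v = ((eS c hb ⟨v, hsv⟩ : {a // a ∈ FX c}) : A) := by
    intro c v hc hb hsv
    subst hc
    rw [hwdef]
    simp only [dif_neg hb]
  -- membership of values
  have hwmem : ∀ v : V, w v ∈ FX (G.connectedComponentMk v) ∪ FY (G.connectedComponentMk v) := by
    intro v
    by_cases hb : bip (G.connectedComponentMk v)
    · by_cases hx : v ∈ XF (G.connectedComponentMk v)
      · rw [hwX _ v rfl hb hx]
        exact Finset.mem_union_left _ (eX _ hb ⟨v, hx⟩).2
      · rw [hwY _ v rfl hb hx (hvXY v hb hx)]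
        exact Finset.mem_union_right _ (eY _ hb ⟨v, hvXY v hb hx⟩).2
    · rw [hwS _ v rfl hb (hvS v)]
      exact Finset.mem_union_left _ (eS _ hb ⟨v, hvS v⟩).2
  -- injectivity
  have hwinj : Function.Injective w := by
    intro u v huv
    by_cases hcc : G.connectedComponentMk u = G.connectedComponentMk v
    · set c := G.connectedComponentMk v with hcv
      by_cases hb : bip c
      · by_cases hxu : u ∈ XF c
        · by_cases hxv : v ∈ XF c
          · rw [hwX c u hcc hb hxu, hwX c v rfl hb hxv] at huv
            have := (eX c hb).injective (Subtype.ext huv)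
            exact congrArg Subtype.val this
          · exfalso
            have h1 : w u ∈ FX c := by
              rw [hwX c u hcc hb hxu]
              exact (eX c hb ⟨u, hxu⟩).2
            have h2 : w v ∈ FY c := by
              rw [hwY c v rfl hb hxv (hvXY v hb hxv)]
              exact (eY c hb ⟨v, hvXY v hb hxv⟩).2
            rw [huv] at h1
            exact Finset.disjoint_left.mp (hgd1 c (Finset.mem_univ c)) h1 h2
        · have hbu : bip (G.connectedComponentMk u) := by rwa [hcc]
          have hxu' : u ∉ XF (G.connectedComponentMk u) := by rwa [hcc]
          have hyu : u ∈ YF c := by have := hvXY u hbu hxu'; rwa [hcc] at this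
          by_cases hxv : v ∈ XF c
          · exfalso
            have h1 : w v ∈ FX c := by
              rw [hwX c v rfl hb hxv]
              exact (eX c hb ⟨v, hxv⟩).2
            have h2 : w u ∈ FY c := by
              rw [hwY c u hcc hb hxu hyu]
              exact (eY c hb ⟨u, hyu⟩).2
            rw [huv] at h2
            exact Finset.disjoint_left.mp (hgd1 c (Finset.mem_univ c)) h1 h2
          · have hyv : v ∈ YF c := hvXY v hb hxv
            rw [hwY c u hcc hb hxu hyu, hwY c v rfl hb hxv hyv] at huv
            have := (eY c hb).injective (Subtype.ext huv)
            exact congrArg Subtype.val this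
      · rw [hwS c u hcc hb (by rw [← hcc]; exact hvS u), hwS c v rfl hb (hvS v)] at huv
        have := (eS c hb).injective (Subtype.ext huv)
        exact congrArg Subtype.val this
    · exfalso
      have h1 := hwmem u
      have h2 := hwmem v
      rw [huv] at h1
      exact Finset.disjoint_left.mp
        (hgd2 _ (Finset.mem_univ _) _ (Finset.mem_univ _) hcc) h1 h2
  -- sums over blocks
  have hsumX : ∀ (c) (hb : bip c), ∑ u ∈ XF c, w u = ∑ a ∈ FX c, a := by
    intro c hb
    rw [← Finset.sum_coe_sort (XF c) w, ← Finset.sum_coe_sort (FX c) (fun a => a)]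
    refine Fintype.sum_equiv (eX c hb) _ _ ?_
    intro p
    have hc : G.connectedComponentMk (p : V) = c := by
      have h1 := (hXFmem c p).mp p.2
      have h2 := X_subset_supp (hXYc c hb) h1
      rwa [SimpleGraph.ConnectedComponent.mem_supp_iff] at h2
    exact hwX c p hc hb p.2
  have hsumY : ∀ (c) (hb : bip c), ∑ u ∈ YF c, w u = ∑ a ∈ FY c, a := by
    intro c hb
    rw [← Finset.sum_coe_sort (YF c) w, ← Finset.sum_coe_sort (FY c) (fun a => a)]
    refine Fintype.sum_equiv (eY c hb) _ _ ?_
    intro p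
    have hc : G.connectedComponentMk (p : V) = c := by
      have h1 := (hYFmem c p).mp p.2
      have h2 := Y_subset_supp (hXYc c hb) h1
      rwa [SimpleGraph.ConnectedComponent.mem_supp_iff] at h2
    have hxp : (p : V) ∉ XF c := by
      intro hx
      exact Finset.disjoint_left.mp (hXYU c hb).2 hx p.2
    exact hwY c p hc hb hxp p.2
  have hsumS : ∀ (c) (hb : ¬ bip c), ∑ u ∈ SF c, w u = ∑ a ∈ FX c, a := by
    intro c hb
    rw [← Finset.sum_coe_sort (SF c) w, ← Finset.sum_coe_sort (FX c) (fun a => a)]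
    refine Fintype.sum_equiv (eS c hb) _ _ ?_
    intro p
    have hc : G.connectedComponentMk (p : V) = c := by
      have h1 := (hSFmem c p).mp p.2
      rwa [SimpleGraph.ConnectedComponent.mem_supp_iff] at h1
    exact hwS c p hc hb p.2
  have hcond : ∀ c : G.ConnectedComponent,
      (∃ X Y : Set V, G.IsComponentBipartition c X Y ∧
        ∑ u ∈ X.toFinite.toFinset, w u = ∑ u ∈ Y.toFinite.toFinset, w u) ∨
      ((¬ ∃ X Y : Set V, G.IsComponentBipartition c X Y) ∧
        ∃ a : A, ∑ u ∈ c.supp.toFinite.toFinset, w u = a + a) := by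
    intro c
    by_cases hb : bip c
    · left
      refine ⟨Xc c, Yc c, hXYc c hb, ?_⟩
      calc ∑ u ∈ (Xc c).toFinite.toFinset, w u = ∑ a ∈ FX c, a := hsumX c hb
        _ = ∑ a ∈ FY c, a := (hgx c (Finset.mem_univ c) hb).2.2
        _ = ∑ u ∈ (Yc c).toFinite.toFinset, w u := (hsumY c hb).symm
    · right
      refine ⟨hb, ?_⟩
      obtain ⟨a, ha⟩ := (hgm c (Finset.mem_univ c) hb).2
      refine ⟨a, ?_⟩
      calc ∑ u ∈ c.supp.toFinite.toFinset, w u = ∑ b ∈ FX c, b := hsumS c hb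
        _ = a + a := ha
  obtain ⟨f, hf⟩ := realizable_of_conditions w hcomp hcond
  refine ⟨f, ?_⟩
  show Function.Injective (G.wdeg f)
  rw [hf]
  exact hwinj
end
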